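/- arXiv:1504.08144 — 4 statements merged into one kernel-verified Lean document; each statement's English description precedes it below -/
import Mathlib

section
/- Let a, b, c, μ ∈ ℂ with Re a > Re μ > 0, and assume c is not a nonpositive integer. Then for every real x ∈ (-∞,0) ∪ (0,1), one has ∫_I |y|^{a-μ-1} F(a,b;c;y) · |x-y|^{μ-1}/Γ(μ) dy = (Γ(a-μ)/Γ(a)) · |x|^{a-1} · F(a-μ,b;c;x), where I is the open interval with endpoints 0 and x (fractional integral transformation of type a−, due to Askey and Fitch). -/
open MeasureTheory Set Complex Filter

/-- Pochhammer symbol `(a)_k = a (a+1) ⋯ (a+k-1)`. -/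
noncomputable def poch (a : ℂ) (k : ℕ) : ℂ := ∏ i ∈ Finset.range k, (a + i)

/-- The Gauss hypergeometric function `F(a,b;c;x)` for real `x < 1`, defined by the
power series on `[0,1)` and by the (agreeing) Pfaff series for `x < 0`. -/
noncomputable def hypF (a b c : ℂ) (x : ℝ) : ℂ :=
  if 0 ≤ x then
    ∑' k : ℕ, poch a k * poch b k / (poch c k * (Nat.factorial k : ℂ)) * (x : ℂ) ^ k
  else
    ((1 - x : ℝ) : ℂ) ^ (-a) *
      ∑' k : ℕ, poch a k * poch (c - b) k / (poch c k * (Nat.factorial k : ℂ)) *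
        (((x / (x - 1) : ℝ)) : ℂ) ^ k


lemma poch_succ (a : ℂ) (k : ℕ) : poch a (k+1) = poch a k * (a + k) := by
  simp [poch, Finset.prod_range_succ]

lemma poch_ne_zero {a : ℂ} (ha : 0 < a.re) (k : ℕ) : poch a k ≠ 0 := by
  rw [poch, Finset.prod_ne_zero_iff]
  intro i _ h
  have : (a + (i:ℂ)).re = 0 := by rw [h]; simp
  simp only [Complex.add_re, Complex.natCast_re] at this
  have : (0:ℝ) ≤ i := Nat.cast_nonneg i
  linarith

lemma Gamma_add_nat {a : ℂ} (ha : 0 < a.re) (k : ℕ) :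
    Complex.Gamma (a + k) = poch a k * Complex.Gamma a := by
  induction k with
  | zero => simp [poch]
  | succ n ih =>
      have hne : a + (n:ℂ) ≠ 0 := by
        intro h
        have : (a + (n:ℂ)).re = 0 := by rw [h]; simp
        simp only [Complex.add_re, Complex.natCast_re] at this
        have : (0:ℝ) ≤ n := Nat.cast_nonneg n
        linarith
      have : a + ((n+1 : ℕ):ℂ) = (a + n) + 1 := by push_cast; ring
      rw [this, Complex.Gamma_add_one _ hne, ih, poch_succ]
      ring

lemma norm_add_nat_lower (q : ℂ) (k : ℕ) : (k:ℝ) - ‖q‖ ≤ ‖q + k‖ := by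
  have := norm_sub_norm_le ((k:ℂ)) (-q)
  simp only [sub_neg_eq_add, norm_neg] at this
  calc (k:ℝ) - ‖q‖ = ‖(k:ℂ)‖ - ‖q‖ := by simp
    _ ≤ ‖(k:ℂ) + q‖ := this
    _ = ‖q + k‖ := by rw [add_comm]

lemma tendsto_ratio_aux (p q : ℂ) :
    Tendsto (fun k : ℕ => (p + k) / (q + k)) atTop (nhds 1) := by
  have h0 : Tendsto (fun k : ℕ => (p - q) / (q + k)) atTop (nhds 0) := by
    rw [tendsto_zero_iff_norm_tendsto_zero]
    have hg : Tendsto (fun k : ℕ => ‖p - q‖ / ((k : ℝ) - ‖q‖)) atTop (nhds 0) := by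
      apply Tendsto.div_atTop tendsto_const_nhds
      exact tendsto_atTop_add_const_right _ _ tendsto_natCast_atTop_atTop
    apply squeeze_zero_norm' _ hg
    filter_upwards [eventually_gt_atTop (Nat.ceil (‖q‖ + 1))] with k hk
    have hk' : ‖q‖ + 1 ≤ (k:ℝ) := le_trans (Nat.le_ceil _) (by exact_mod_cast hk.le)
    have hq : (0:ℝ) < (k:ℝ) - ‖q‖ := by linarith
    have hlow := norm_add_nat_lower q k
    rw [norm_norm, norm_div]
    gcongr
  have heq : ∀ᶠ k : ℕ in atTop, 1 + (p - q) / (q + k) = (p + k) / (q + k) := by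
    filter_upwards [eventually_gt_atTop (Nat.ceil ‖q‖)] with k hk
    have hk' : ‖q‖ < (k:ℝ) := lt_of_le_of_lt (Nat.le_ceil _) (by exact_mod_cast hk)
    have hne : q + (k:ℂ) ≠ 0 := by
      intro h
      have := norm_add_nat_lower q k
      rw [h, norm_zero] at this
      linarith
    field_simp
    ring
  have h1 : Tendsto (fun k : ℕ => 1 + (p - q) / (q + k)) atTop (nhds (1 + 0)) :=
    (tendsto_const_nhds : Tendsto (fun _ : ℕ => (1:ℂ)) atTop (nhds 1)).add h0
  rw [add_zero] at h1
  exact Tendsto.congr' heq h1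

lemma poch_eq_zero_of_le {a : ℂ} {k l : ℕ} (h : poch a k = 0) (hkl : k ≤ l) :
    poch a l = 0 := by
  induction l, hkl using Nat.le_induction with
  | base => exact h
  | succ n hn ih => rw [poch_succ, ih, zero_mul]

lemma cnat_add_ne_zero {c : ℂ} (hc : ∀ n : ℕ, c ≠ -n) (k : ℕ) : c + k ≠ 0 := by
  intro h
  exact hc k (by linear_combination h)

lemma poch_ne_zero' {c : ℂ} (hc : ∀ n : ℕ, c ≠ -n) (k : ℕ) : poch c k ≠ 0 := by
  rw [poch, Finset.prod_ne_zero_iff]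
  exact fun i _ => cnat_add_ne_zero hc i


lemma summable_term (α β c : ℂ) (hc : ∀ n : ℕ, c ≠ -n) {X : ℝ} (hX0 : 0 ≤ X) (hX1 : X < 1) :
    Summable (fun k : ℕ =>
      ‖poch α k * poch β k / (poch c k * (Nat.factorial k : ℂ))‖ * X ^ k) := by
  set t : ℕ → ℂ := fun k => poch α k * poch β k / (poch c k * (Nat.factorial k : ℂ)) with ht
  rcases eq_or_lt_of_le hX0 with hX0' | hX0'
  · apply summable_of_ne_finset_zero (s := Finset.range 1)
    intro k hk
    have hk1 : 1 ≤ k := by simp at hk; omega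
    simp [← hX0', zero_pow (by omega : k ≠ 0)]
  by_cases hz : ∃ k0, poch α k0 * poch β k0 = 0
  · obtain ⟨k0, hk0⟩ := hz
    apply summable_of_ne_finset_zero (s := Finset.range k0)
    intro k hk
    have hk1 : k0 ≤ k := by simpa using hk
    have : poch α k * poch β k = 0 := by
      rcases mul_eq_zero.mp hk0 with h | h
      · rw [poch_eq_zero_of_le h hk1, zero_mul]
      · rw [poch_eq_zero_of_le h hk1, mul_zero]
    simp [ht, this]
  push_neg at hz
  have htne : ∀ k, t k ≠ 0 := by
    intro k
    apply div_ne_zero (hz k)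
    exact mul_ne_zero (poch_ne_zero' hc k) (by exact_mod_cast Nat.factorial_ne_zero k)
  have hgne : ∀ k, ‖t k‖ * X ^ k ≠ 0 := fun k =>
    mul_ne_zero (norm_ne_zero_iff.mpr (htne k)) (pow_ne_zero k (ne_of_gt hX0'))
  apply summable_of_ratio_test_tendsto_lt_one hX1 (Eventually.of_forall hgne)
  have key : ∀ k : ℕ, ‖‖t (k+1)‖ * X ^ (k+1)‖ / ‖‖t k‖ * X ^ k‖
      = ‖(α + k) / (c + k) * ((β + k) / (1 + k)) * X‖ := by
    intro k
    have hrec : t (k+1) = t k * ((α + k) * (β + k) / ((c + k) * (k+1))) := by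
      simp only [ht, poch_succ]
      rw [Nat.factorial_succ]
      push_cast
      field_simp
    have hXk : (0:ℝ) < X ^ k := pow_pos hX0' k
    rw [hrec]
    rw [norm_mul, norm_mul, norm_mul, norm_norm, norm_norm]
    rw [pow_succ]
    have h1 : ‖X ^ k * X‖ = X ^ k * X := by
      rw [Real.norm_eq_abs, abs_of_pos (mul_pos hXk hX0')]
    have h2 : ‖X ^ k‖ = X ^ k := by rw [Real.norm_eq_abs, abs_of_pos hXk]
    rw [h1]
    have hden : ‖‖t k‖ * X ^ k‖ = ‖t k‖ * X ^ k := by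
      rw [Real.norm_eq_abs, _root_.abs_of_nonneg (by positivity)]
    rw [hden, div_eq_iff (hgne k)]
    have h3 : ‖(α + k) / (c + k) * ((β + k) / (1 + k)) * X‖
        = ‖(α+k) * (β+k) / ((c+k) * (k+1))‖ * X := by
      rw [norm_mul, Complex.norm_real, Real.norm_eq_abs, abs_of_pos hX0']
      congr 1
      rw [div_mul_div_comm]
      ring_nf
    rw [h3]
    ring
  apply Tendsto.congr' (EventuallyEq.symm (Eventually.of_forall key))
  have : Tendsto (fun k : ℕ => (α + k) / (c + k) * ((β + k) / (1 + k)) * (X:ℂ))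
      atTop (nhds (1 * 1 * X)) :=
    ((tendsto_ratio_aux α c).mul (tendsto_ratio_aux β 1)).mul tendsto_const_nhds
  rw [one_mul, one_mul] at this
  have := this.norm
  rwa [Complex.norm_real, Real.norm_eq_abs, _root_.abs_of_nonneg hX0] at this

lemma ne_neg_nat_of_re_pos {s : ℂ} (hs : 0 < s.re) : ∀ m : ℕ, s ≠ -m := by
  intro m h
  have : s.re = -(m:ℝ) := by rw [h]; simp
  have hm : (0:ℝ) ≤ m := Nat.cast_nonneg m
  linarith [this ▸ hs]

lemma Gamma_pos_ne_zero {s : ℂ} (hs : 0 < s.re) : Complex.Gamma s ≠ 0 :=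
  Complex.Gamma_ne_zero (ne_neg_nat_of_re_pos hs)

lemma beta_Ioo {s μ : ℂ} (hs : 0 < s.re) (hμ : 0 < μ.re) :
    ∫ u in Ioo (0:ℝ) 1, (u:ℂ)^(s-1) * ((1:ℂ) - u)^(μ-1)
      = Complex.Gamma s * Complex.Gamma μ / Complex.Gamma (s+μ) := by
  have h := Complex.Gamma_mul_Gamma_eq_betaIntegral hs hμ
  have hne : Complex.Gamma (s+μ) ≠ 0 := Gamma_pos_ne_zero (by simp [Complex.add_re]; positivity)
  rw [Complex.betaIntegral, intervalIntegral.integral_of_le zero_le_one,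
    integral_Ioc_eq_integral_Ioo] at h
  rw [eq_div_iff hne, mul_comm]
  exact h.symm

lemma lemD (a β c μ : ℂ) (hμ : 0 < μ.re) (hB : 0 < (a-μ).re)
    (hc : ∀ n : ℕ, c ≠ -n) {X : ℝ} (hX0 : 0 ≤ X) (hX1 : X < 1) :
    ∫ u in Ioo (0:ℝ) 1, (u:ℂ)^(a-μ-1) * ((1:ℂ) - u)^(μ-1) *
        ∑' k : ℕ, poch a k * poch β k / (poch c k * (Nat.factorial k:ℂ)) * ((X*u : ℝ):ℂ)^k
      = Complex.Gamma (a-μ) * Complex.Gamma μ / Complex.Gamma a *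
        ∑' k : ℕ, poch (a-μ) k * poch β k / (poch c k * (Nat.factorial k:ℂ)) * (X:ℂ)^k := by
  have hare : 0 < a.re := by
    have h := hB
    rw [Complex.sub_re] at h
    linarith
  set t : ℕ → ℂ := fun k => poch a k * poch β k / (poch c k * (Nat.factorial k:ℂ)) with ht
  set F : ℕ → ℝ → ℂ :=
    fun k u => (u:ℂ)^(a-μ-1) * ((1:ℂ) - u)^(μ-1) * (t k * ((X*u : ℝ):ℂ)^k) with hF
  -- pointwise rewriting of F on Ioo
  have hFeq : ∀ k : ℕ, ∀ u ∈ Ioo (0:ℝ) 1,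
      F k u = t k * (X:ℂ)^k * ((u:ℂ)^(a-μ+k-1) * ((1:ℂ) - u)^(μ-1)) := by
    intro k u hu
    have hu0 : (u:ℂ) ≠ 0 := by exact_mod_cast ne_of_gt hu.1
    have h1 : ((X*u : ℝ):ℂ)^k = (X:ℂ)^k * (u:ℂ)^k := by push_cast; rw [mul_pow]
    have h2 : (u:ℂ)^(a-μ+k-1) = (u:ℂ)^(a-μ-1) * (u:ℂ)^k := by
      rw [← Complex.cpow_natCast, ← Complex.cpow_add _ _ hu0]
      congr 1; ring
    have hFu : F k u = (u:ℂ)^(a-μ-1) * ((1:ℂ) - u)^(μ-1) * (t k * ((X*u : ℝ):ℂ)^k) := rfl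
    rw [hFu, h1, h2]; ring
  -- each F k integrable on Ioo 0 1
  have hInt : ∀ k : ℕ, IntegrableOn (F k) (Ioo (0:ℝ) 1) := by
    intro k
    have hb : IntervalIntegrable
        (fun u : ℝ => (u:ℂ)^(a-μ+k-1) * ((1:ℂ) - u)^(μ-1)) volume 0 1 := by
      have : (0:ℝ) < (a-μ+k).re := by
        simp only [Complex.add_re, Complex.natCast_re]
        have : (0:ℝ) ≤ k := Nat.cast_nonneg k
        linarith
      simpa using Complex.betaIntegral_convergent this hμ
    have hIoc : IntegrableOn
        (fun u : ℝ => (u:ℂ)^(a-μ+k-1) * ((1:ℂ) - u)^(μ-1)) (Ioc (0:ℝ) 1) :=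
      (intervalIntegrable_iff_integrableOn_Ioc_of_le zero_le_one).mp hb
    have hint2 : IntegrableOn
        (fun u : ℝ => t k * (X:ℂ)^k * ((u:ℂ)^(a-μ+k-1) * ((1:ℂ) - u)^(μ-1))) (Ioo (0:ℝ) 1) :=
      (hIoc.mono_set Ioo_subset_Ioc_self).const_mul _
    exact hint2.congr_fun (fun u hu => (hFeq k u hu).symm) measurableSet_Ioo
  -- real majorant integrable
  have hgInt : IntegrableOn
      (fun u : ℝ => u ^ ((a-μ).re - 1) * (1-u) ^ (μ.re - 1)) (Ioo (0:ℝ) 1) := by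
    have hb : IntervalIntegrable
        (fun u : ℝ => (u:ℂ)^((((a-μ).re:ℝ):ℂ)-1) * ((1:ℂ)-u)^(((μ.re:ℝ):ℂ)-1)) volume 0 1 :=
      Complex.betaIntegral_convergent (by simpa using hB) (by simpa using hμ)
    have hIoc := (intervalIntegrable_iff_integrableOn_Ioc_of_le zero_le_one).mp hb
    have hn : IntegrableOn
        (fun u : ℝ => ‖(u:ℂ)^((((a-μ).re:ℝ):ℂ)-1) * ((1:ℂ)-u)^(((μ.re:ℝ):ℂ)-1)‖)
        (Ioo (0:ℝ) 1) := (hIoc.mono_set Ioo_subset_Ioc_self).norm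
    apply hn.congr_fun ?_ measurableSet_Ioo
    intro u hu
    dsimp only
    have h1u : (0:ℝ) < 1 - u := by linarith [hu.2]
    rw [norm_mul,
      Complex.norm_cpow_eq_rpow_re_of_pos hu.1]
    have hcast : ((1:ℂ) - (u:ℂ)) = (((1 - u : ℝ)):ℂ) := by push_cast; ring
    rw [hcast, Complex.norm_cpow_eq_rpow_re_of_pos h1u]
    simp [Complex.sub_re, Complex.ofReal_re, Complex.one_re]
  -- norm bound
  have hnorm : ∀ k : ℕ, ∀ u ∈ Ioo (0:ℝ) 1,
      ‖F k u‖ ≤ (‖t k‖ * X ^ k) * (u ^ ((a-μ).re - 1) * (1-u) ^ (μ.re - 1)) := by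
    intro k u hu
    have h1u : (0:ℝ) < 1 - u := by linarith [hu.2]
    have hFu : F k u = (u:ℂ)^(a-μ-1) * ((1:ℂ) - u)^(μ-1) * (t k * ((X*u : ℝ):ℂ)^k) := rfl
    rw [hFu, norm_mul, norm_mul, norm_mul, 
      Complex.norm_cpow_eq_rpow_re_of_pos hu.1]
    have hcast : ((1:ℂ) - (u:ℂ)) = (((1 - u : ℝ)):ℂ) := by push_cast; ring
    rw [hcast, Complex.norm_cpow_eq_rpow_re_of_pos h1u]
    have hXu : ‖((X*u : ℝ):ℂ)^k‖ ≤ X ^ k := by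
      rw [norm_pow, Complex.norm_real, Real.norm_eq_abs,
        _root_.abs_of_nonneg (mul_nonneg hX0 hu.1.le)]
      exact pow_le_pow_left₀ (mul_nonneg hX0 hu.1.le)
        (by nlinarith [hu.2, hX0] : X * u ≤ X) k
    have hre1 : (a - μ - 1).re = (a-μ).re - 1 := by simp [Complex.sub_re]
    have hre2 : (μ - 1).re = μ.re - 1 := by simp [Complex.sub_re]
    rw [hre1, hre2]
    have hrp1 : (0:ℝ) ≤ u ^ ((a-μ).re - 1) := Real.rpow_nonneg hu.1.le _
    have hrp2 : (0:ℝ) ≤ (1-u) ^ (μ.re - 1) := Real.rpow_nonneg h1u.le _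
    calc u ^ ((a-μ).re - 1) * (1-u) ^ (μ.re - 1) * (‖t k‖ * ‖((X*u : ℝ):ℂ)^k‖)
        ≤ u ^ ((a-μ).re - 1) * (1-u) ^ (μ.re - 1) * (‖t k‖ * X ^ k) := by
          apply mul_le_mul_of_nonneg_left _ (mul_nonneg hrp1 hrp2)
          exact mul_le_mul_of_nonneg_left hXu (norm_nonneg _)
      _ = (‖t k‖ * X ^ k) * (u ^ ((a-μ).re - 1) * (1-u) ^ (μ.re - 1)) := by ring
  -- summability of integrals of norms
  have hSum : Summable (fun k : ℕ => ∫ u in Ioo (0:ℝ) 1, ‖F k u‖) := by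
    set M : ℝ := ∫ u in Ioo (0:ℝ) 1, u ^ ((a-μ).re - 1) * (1-u) ^ (μ.re - 1) with hM
    apply Summable.of_nonneg_of_le
      (fun k => integral_nonneg (fun u => norm_nonneg _))
      (fun k => ?_) (((summable_term a β c hc hX0 hX1)).mul_right M)
    have hle : ∫ u in Ioo (0:ℝ) 1, ‖F k u‖
        ≤ ∫ u in Ioo (0:ℝ) 1, (‖t k‖ * X ^ k) * (u ^ ((a-μ).re - 1) * (1-u) ^ (μ.re - 1)) := by
      apply setIntegral_mono_on ((hInt k).norm) (hgInt.const_mul _) measurableSet_Ioo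
      exact hnorm k
    calc ∫ u in Ioo (0:ℝ) 1, ‖F k u‖ ≤ _ := hle
      _ = ‖t k‖ * X ^ k * M := by rw [integral_const_mul]
  -- interchange
  have hswap : (∫ u in Ioo (0:ℝ) 1, ∑' k : ℕ, F k u)
      = ∑' k : ℕ, ∫ u in Ioo (0:ℝ) 1, F k u :=
    (integral_tsum_of_summable_integral_norm hInt hSum).symm
  -- evaluate each integral
  have hEval : ∀ k : ℕ, (∫ u in Ioo (0:ℝ) 1, F k u)
      = t k * (X:ℂ)^k * (Complex.Gamma (a-μ+k) * Complex.Gamma μ / Complex.Gamma (a+k)) := by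
    intro k
    rw [setIntegral_congr_fun measurableSet_Ioo (hFeq k), integral_const_mul]
    have hs : (0:ℝ) < (a-μ+k).re := by
      simp only [Complex.add_re, Complex.natCast_re]
      have : (0:ℝ) ≤ k := Nat.cast_nonneg k
      linarith
    rw [beta_Ioo hs hμ]
    congr 2
    push_cast
    ring
  -- assemble
  have hL : (fun u : ℝ => (u:ℂ)^(a-μ-1) * ((1:ℂ) - u)^(μ-1) *
        ∑' k : ℕ, t k * ((X*u : ℝ):ℂ)^k) = fun u => ∑' k : ℕ, F k u := by
    funext u
    rw [← tsum_mul_left]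
  rw [hL, hswap]
  have h1 : (∑' k : ℕ, ∫ u in Ioo (0:ℝ) 1, F k u)
      = ∑' k : ℕ, (Complex.Gamma (a-μ) * Complex.Gamma μ / Complex.Gamma a) *
          (poch (a-μ) k * poch β k / (poch c k * (Nat.factorial k:ℂ)) * (X:ℂ)^k) := by
    apply tsum_congr
    intro k
    rw [hEval k, Gamma_add_nat hB k, Gamma_add_nat hare k]
    have h2 := poch_ne_zero hare k
    have h3 := poch_ne_zero' hc k
    have h4 : (Nat.factorial k : ℂ) ≠ 0 := by exact_mod_cast Nat.factorial_ne_zero k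
    have h5 : Complex.Gamma a ≠ 0 := Gamma_pos_ne_zero hare
    simp only [ht]
    field_simp
  rw [h1, tsum_mul_left]

lemma cpow_pos_exp {p : ℝ} (hp : 0 < p) (s : ℂ) :
    ((p:ℝ):ℂ)^s = Complex.exp (s * ((Real.log p : ℝ):ℂ)) := by
  rw [Complex.cpow_def_of_ne_zero (by exact_mod_cast hp.ne'), Complex.ofReal_log hp.le,
    mul_comm]

lemma ofReal_pos_exp {p : ℝ} (hp : 0 < p) :
    ((p:ℝ):ℂ) = Complex.exp ((1:ℂ) * ((Real.log p : ℝ):ℂ)) := by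
  rw [← cpow_pos_exp hp 1, Complex.cpow_one]

lemma alg_neg (p q S G Ga A : ℂ) (hG : G ≠ 0) :
    p * q / G * (A * G / Ga * S) = A / Ga * p * (q * S) := by
  field_simp

lemma alg_pos (p S G Ga A : ℂ) (hG : G ≠ 0) :
    p / G * (A * G / Ga * S) = A / Ga * p * S := by
  field_simp

set_option maxHeartbeats 1000000 in
/-- Fractional integral transformation of type `a-` (Askey–Fitch). -/
theorem stmt_3 (a b c μ : ℂ) (ha : μ.re < a.re) (hμ : 0 < μ.re)
    (hc1 : ∀ n : ℕ, c ≠ -(n : ℂ))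
    (x : ℝ) (hx : x < 0 ∨ (0 < x ∧ x < 1)) :
    ∫ y in uIoo 0 x,
        ((|y| : ℝ) : ℂ) ^ (a - μ - 1) * hypF a b c y *
          (((|x - y| : ℝ) : ℂ) ^ (μ - 1) / Complex.Gamma μ)
      = Complex.Gamma (a - μ) / Complex.Gamma a * ((|x| : ℝ) : ℂ) ^ (a - 1) *
        hypF (a - μ) b c x := by
  have hB : 0 < (a - μ).re := by rw [Complex.sub_re]; linarith
  have hGμ : Complex.Gamma μ ≠ 0 := Gamma_pos_ne_zero hμ
  have hGa : Complex.Gamma a ≠ 0 := Gamma_pos_ne_zero (by linarith)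
  rcases hx with hneg | ⟨hx0, hx1⟩
  · -- negative case
    have hP : (0:ℝ) < -x := by linarith
    have hQ : (0:ℝ) < 1 - x := by linarith
    have hxne : x ≠ 0 := hneg.ne
    have hx1ne : x - 1 ≠ 0 := by intro h; linarith [sub_eq_zero.mp h]
    have hX0 : (0:ℝ) ≤ x/(x-1) := le_of_lt (div_pos_of_neg_of_neg hneg (by linarith))
    have hX1 : x/(x-1) < 1 := by
      have h1 : x/(x-1) = 1 + 1/(x-1) := by field_simp; ring
      have h2 : 1/(x-1) < 0 := one_div_neg.mpr (by linarith)
      linarith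
    have huIoo : uIoo (0:ℝ) x = Ioo x 0 := by
      rw [uIoo, inf_eq_right.mpr hneg.le, sup_eq_left.mpr hneg.le]
    have hdpos : ∀ u ∈ Ioo (0:ℝ) 1, (0:ℝ) < 1 - x + x*u := by
      intro u hu; nlinarith [hu.1, hu.2]
    have himg : (fun u : ℝ => x*u/(1-x+x*u)) '' Ioo 0 1 = Ioo x 0 := by
      ext y
      constructor
      · rintro ⟨u, hu, rfl⟩
        have hd := hdpos u hu
        constructor
        · rw [lt_div_iff₀ hd]; nlinarith [mul_pos (mul_pos hP hQ) (sub_pos.mpr hu.2)]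
        · exact div_neg_of_neg_of_pos (mul_neg_of_neg_of_pos hneg hu.1) hd
      · rintro ⟨hy1, hy2⟩
        have h1y : (0:ℝ) < 1 - y := by linarith
        refine ⟨y*(1-x)/(x*(1-y)), ⟨?_, ?_⟩, ?_⟩
        · apply div_pos_of_neg_of_neg (mul_neg_of_neg_of_pos hy2 hQ) (mul_neg_of_neg_of_pos hneg h1y)
        · have hDneg : x*(1-y) < 0 := mul_neg_of_neg_of_pos hneg h1y
          have hq : y*(1-x)/(x*(1-y)) - 1 = (y - x)/(x*(1-y)) := by
            field_simp
            ring
          have := div_neg_of_pos_of_neg (sub_pos.mpr hy1) hDneg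
          linarith [hq ▸ this]
        · have hden : 1 - x + x*(y*(1-x)/(x*(1-y))) = (1-x)/(1-y) := by
            field_simp
            ring
          dsimp only
          rw [hden]
          field_simp
    have hder : ∀ u ∈ Ioo (0:ℝ) 1,
        HasDerivWithinAt (fun u : ℝ => x*u/(1-x+x*u))
          (x*(1-x)/(1-x+x*u)^2) (Ioo (0:ℝ) 1) u := by
      intro u hu
      have hd := hdpos u hu
      have h1 : HasDerivAt (fun u : ℝ => x*u) x u := by
        simpa using (hasDerivAt_id u).const_mul x
      have h2 : HasDerivAt (fun u : ℝ => 1 - x + x*u) x u := by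
        simpa using ((hasDerivAt_id u).const_mul x).const_add (1-x)
      have h3 := h1.div h2 hd.ne'
      have h4 : (x * (1-x+x*u) - x*u*x)/(1-x+x*u)^2 = x*(1-x)/(1-x+x*u)^2 := by
        congr 1; ring
      rw [h4] at h3
      exact h3.hasDerivWithinAt
    have hinj : InjOn (fun u : ℝ => x*u/(1-x+x*u)) (Ioo (0:ℝ) 1) := by
      intro u hu v hv h
      have hdu := hdpos u hu
      have hdv := hdpos v hv
      dsimp only at h
      rw [div_eq_div_iff hdu.ne' hdv.ne'] at h
      have h5 : (u - v) * (x*(1-x)) = 0 := by linear_combination h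
      rcases mul_eq_zero.mp h5 with h6 | h6
      · linarith [sub_eq_zero.mp h6]
      · nlinarith
    rw [huIoo, ← himg,
      integral_image_eq_integral_abs_deriv_smul measurableSet_Ioo hder hinj]
    have hpt : ∀ u ∈ Ioo (0:ℝ) 1,
        |x*(1-x)/(1-x+x*u)^2| •
          (((|x*u/(1-x+x*u)| : ℝ) : ℂ) ^ (a - μ - 1) * hypF a b c (x*u/(1-x+x*u)) *
            (((|x - x*u/(1-x+x*u)| : ℝ) : ℂ) ^ (μ - 1) / Complex.Gamma μ))
        = ((((-x:ℝ)):ℂ)^(a-1) * (((1-x:ℝ)):ℂ)^(μ-a) / Complex.Gamma μ) *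
            ((u:ℂ)^(a-μ-1) * ((1:ℂ) - u)^(μ-1) *
              ∑' k : ℕ, poch a k * poch (c-b) k / (poch c k * (Nat.factorial k:ℂ)) *
                ((x/(x-1)*u : ℝ):ℂ)^k) := by
      intro u hu
      have hu0 : (0:ℝ) < u := hu.1
      have hu1 : (0:ℝ) < 1 - u := by linarith [hu.2]
      have hd := hdpos u hu
      set D : ℝ := 1 - x + x*u with hD
      -- absolute values
      have habs0 : |x*(1-x)/D^2| = (-x)*(1-x)/D^2 := by
        rw [abs_of_neg (div_neg_of_neg_of_pos (by nlinarith [mul_pos hP hQ]) (by positivity))]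
        ring
      have habs1 : |x*u/D| = (-x)*u/D := by
        rw [abs_of_neg (div_neg_of_neg_of_pos (mul_neg_of_neg_of_pos hneg hu0) hd)]
        ring
      have hsub2 : x - x*u/D = x*(1-x)*(1-u)/D := by
        field_simp
        ring
      have habs2 : |x - x*u/D| = (-x)*(1-x)*(1-u)/D := by
        rw [hsub2, abs_of_neg (div_neg_of_neg_of_pos
          (by nlinarith [mul_pos (mul_pos hP hQ) hu1]) hd)]
        ring
      -- hypF at negative argument
      have hyneg : x*u/D < 0 := div_neg_of_neg_of_pos (mul_neg_of_neg_of_pos hneg hu0) hd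
      have h1y : (1 - x*u/D : ℝ) = (1-x)/D := by field_simp; ring
      have harg : (x*u/D) / (x*u/D - 1) = x/(x-1)*u := by
        have h2y : (x*u/D - 1 : ℝ) = (x-1)/D := by field_simp; ring
        rw [h2y]
        field_simp
      have hhyp : hypF a b c (x*u/D)
          = (((1-x)/D : ℝ):ℂ)^(-a) *
            ∑' k : ℕ, poch a k * poch (c-b) k / (poch c k * (Nat.factorial k:ℂ)) *
              ((x/(x-1)*u : ℝ):ℂ)^k := by
        rw [hypF, if_neg (not_le.mpr hyneg), h1y, harg]
      rw [habs0, habs1, habs2, hhyp, Complex.real_smul]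
      -- to exponential form
      have lgA : Real.log ((-x)*u/D) = Real.log (-x) + Real.log u - Real.log D := by
        rw [Real.log_div (by positivity) hd.ne', Real.log_mul hP.ne' hu0.ne']
      have lgB : Real.log ((1-x)/D) = Real.log (1-x) - Real.log D :=
        Real.log_div hQ.ne' hd.ne'
      have lgC : Real.log ((-x)*(1-x)*(1-u)/D)
          = Real.log (-x) + Real.log (1-x) + Real.log (1-u) - Real.log D := by
        rw [Real.log_div (by positivity) hd.ne', Real.log_mul (by positivity) hu1.ne',
          Real.log_mul hP.ne' hQ.ne']
      have lgP : Real.log ((-x)*(1-x)/D^2)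
          = Real.log (-x) + Real.log (1-x) - 2*Real.log D := by
        rw [Real.log_div (by positivity) (by positivity), Real.log_mul hP.ne' hQ.ne',
          Real.log_pow]
        push_cast
        ring
      have e0 : (((-x)*(1-x)/D^2 : ℝ):ℂ)
          = Complex.exp ((1:ℂ) * (((Real.log (-x):ℝ):ℂ) + ((Real.log (1-x):ℝ):ℂ)
              - 2*((Real.log D:ℝ):ℂ))) := by
        rw [ofReal_pos_exp (by positivity), lgP]; push_cast; ring_nf
      have eA : (((-x)*u/D : ℝ):ℂ)^(a-μ-1)
          = Complex.exp ((a-μ-1) * (((Real.log (-x):ℝ):ℂ) + ((Real.log u:ℝ):ℂ)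
              - ((Real.log D:ℝ):ℂ))) := by
        rw [cpow_pos_exp (by positivity), lgA]; push_cast; ring_nf
      have eB : (((1-x)/D : ℝ):ℂ)^(-a)
          = Complex.exp ((-a) * (((Real.log (1-x):ℝ):ℂ) - ((Real.log D:ℝ):ℂ))) := by
        rw [cpow_pos_exp (by positivity), lgB]; push_cast; ring_nf
      have eC : (((-x)*(1-x)*(1-u)/D : ℝ):ℂ)^(μ-1)
          = Complex.exp ((μ-1) * (((Real.log (-x):ℝ):ℂ) + ((Real.log (1-x):ℝ):ℂ)
              + ((Real.log (1-u):ℝ):ℂ) - ((Real.log D:ℝ):ℂ))) := by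
        rw [cpow_pos_exp (by positivity), lgC]; push_cast; ring_nf
      have eP : (((-x:ℝ)):ℂ)^(a-1)
          = Complex.exp ((a-1) * ((Real.log (-x):ℝ):ℂ)) := cpow_pos_exp hP _
      have eQ : (((1-x:ℝ)):ℂ)^(μ-a)
          = Complex.exp ((μ-a) * ((Real.log (1-x):ℝ):ℂ)) := cpow_pos_exp hQ _
      have eu : (u:ℂ)^(a-μ-1)
          = Complex.exp ((a-μ-1) * ((Real.log u:ℝ):ℂ)) := cpow_pos_exp hu0 _
      have ev : ((1:ℂ) - (u:ℂ))^(μ-1)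
          = Complex.exp ((μ-1) * ((Real.log (1-u):ℝ):ℂ)) := by
        have hcast : ((1:ℂ) - (u:ℂ)) = (((1-u:ℝ)):ℂ) := by push_cast; ring
        rw [hcast, cpow_pos_exp hu1]
      rw [e0, eA, eB, eC, eP, eQ, eu, ev]
      set l1 : ℂ := ((Real.log (-x):ℝ):ℂ)
      set l2 : ℂ := ((Real.log (1-x):ℝ):ℂ)
      set l3 : ℂ := ((Real.log D:ℝ):ℂ)
      set l4 : ℂ := ((Real.log u:ℝ):ℂ)
      set l5 : ℂ := ((Real.log (1-u):ℝ):ℂ)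
      set S : ℂ := ∑' k : ℕ,
        poch a k * poch (c-b) k / (poch c k * (Nat.factorial k:ℂ)) *
          ((x/(x-1)*u : ℝ):ℂ)^k with hS
      have l : Complex.exp ((1:ℂ) * (l1 + l2 - 2*l3)) *
            Complex.exp ((a-μ-1) * (l1 + l4 - l3)) *
            Complex.exp ((-a) * (l2 - l3)) *
            Complex.exp ((μ-1) * (l1 + l2 + l5 - l3))
          = Complex.exp ((a-1) * l1) * (Complex.exp ((μ-a) * l2) *
              (Complex.exp ((a-μ-1) * l4) * Complex.exp ((μ-1) * l5))) := by
        rw [← Complex.exp_add, ← Complex.exp_add, ← Complex.exp_add,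
          ← Complex.exp_add, ← Complex.exp_add, ← Complex.exp_add]
        congr 1; ring
      linear_combination (S / Complex.Gamma μ) * l
    rw [setIntegral_congr_fun measurableSet_Ioo hpt, integral_const_mul,
      lemD a (c-b) c μ hμ hB hc1 hX0 hX1]
    have hhyp2 : hypF (a-μ) b c x
        = ((1 - x : ℝ) : ℂ) ^ (-(a-μ)) *
          ∑' k : ℕ, poch (a-μ) k * poch (c-b) k / (poch c k * (Nat.factorial k:ℂ)) *
            ((x/(x-1) : ℝ):ℂ)^k := by
      rw [hypF, if_neg (not_le.mpr hneg)]
    rw [hhyp2, abs_of_neg hneg]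
    have hexp : (((1-x:ℝ)):ℂ)^(μ-a) = (((1-x:ℝ)):ℂ)^(-(a-μ)) := by
      congr 1; ring
    rw [hexp]
    exact alg_neg _ _ _ _ _ _ hGμ
  · -- positive case
    have hxne : (x:ℂ) ≠ 0 := by exact_mod_cast hx0.ne'
    have huIoo : uIoo (0:ℝ) x = Ioo 0 x := by
      rw [uIoo, inf_eq_left.mpr hx0.le, sup_eq_right.mpr hx0.le]
    have himg : (fun u : ℝ => x*u) '' Ioo 0 1 = Ioo 0 x := by
      have := image_mul_left_Ioo hx0 (0:ℝ) 1
      simpa using this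
    have hder : ∀ u ∈ Ioo (0:ℝ) 1,
        HasDerivWithinAt (fun u : ℝ => x*u) x (Ioo (0:ℝ) 1) u := by
      intro u _
      simpa using ((hasDerivAt_id u).const_mul x).hasDerivWithinAt
    have hinj : InjOn (fun u : ℝ => x*u) (Ioo (0:ℝ) 1) :=
      fun u _ v _ h => mul_left_cancel₀ hx0.ne' h
    rw [huIoo, ← himg,
      integral_image_eq_integral_abs_deriv_smul measurableSet_Ioo hder hinj]
    have hpt : ∀ u ∈ Ioo (0:ℝ) 1,
        |x| • (((|x*u| : ℝ) : ℂ) ^ (a - μ - 1) * hypF a b c (x*u) *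
          (((|x - x*u| : ℝ) : ℂ) ^ (μ - 1) / Complex.Gamma μ))
        = ((x:ℂ)^(a-1)/Complex.Gamma μ) * ((u:ℂ)^(a-μ-1) * ((1:ℂ) - u)^(μ-1) *
            ∑' k : ℕ, poch a k * poch b k / (poch c k * (Nat.factorial k:ℂ)) *
              ((x*u : ℝ):ℂ)^k) := by
      intro u hu
      have hu0 : (0:ℝ) < u := hu.1
      have hu1 : (0:ℝ) < 1 - u := by linarith [hu.2]
      have hxu : (0:ℝ) < x*u := mul_pos hx0 hu0
      have habs1 : |x*u| = x*u := abs_of_pos hxu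
      have habs2 : |x - x*u| = x*(1-u) := by
        rw [abs_of_pos (by nlinarith)]; ring
      have hhyp : hypF a b c (x*u) = ∑' k : ℕ,
          poch a k * poch b k / (poch c k * (Nat.factorial k:ℂ)) * ((x*u : ℝ):ℂ)^k := by
        rw [hypF, if_pos hxu.le]
      rw [habs1, habs2, hhyp, abs_of_pos hx0, Complex.real_smul]
      -- log identities
      have lg1 : Real.log (x*u) = Real.log x + Real.log u := Real.log_mul hx0.ne' hu0.ne'
      have lg2 : Real.log (x*(1-u)) = Real.log x + Real.log (1-u) :=
        Real.log_mul hx0.ne' hu1.ne'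
      have e1 : ((x*u : ℝ):ℂ)^(a-μ-1)
          = Complex.exp ((a-μ-1) * (((Real.log x:ℝ):ℂ) + ((Real.log u:ℝ):ℂ))) := by
        rw [cpow_pos_exp hxu, lg1]; push_cast; ring_nf
      have e2 : ((x*(1-u) : ℝ):ℂ)^(μ-1)
          = Complex.exp ((μ-1) * (((Real.log x:ℝ):ℂ) + ((Real.log (1-u):ℝ):ℂ))) := by
        rw [cpow_pos_exp (by positivity), lg2]; push_cast; ring_nf
      have e3 : (x:ℂ) = Complex.exp ((1:ℂ) * ((Real.log x:ℝ):ℂ)) := ofReal_pos_exp hx0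
      have e4 : (x:ℂ)^(a-1) = Complex.exp ((a-1) * ((Real.log x:ℝ):ℂ)) := cpow_pos_exp hx0 _
      have e5 : (u:ℂ)^(a-μ-1) = Complex.exp ((a-μ-1) * ((Real.log u:ℝ):ℂ)) :=
        cpow_pos_exp hu0 _
      have e6 : ((1:ℂ) - (u:ℂ))^(μ-1)
          = Complex.exp ((μ-1) * ((Real.log (1-u):ℝ):ℂ)) := by
        have : ((1:ℂ) - (u:ℂ)) = (((1-u:ℝ)):ℂ) := by push_cast; ring
        rw [this, cpow_pos_exp hu1]
      rw [e1, e2, e4, e5, e6, e3]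
      set lx : ℂ := ((Real.log x:ℝ):ℂ) with hlx
      set lu : ℂ := ((Real.log u:ℝ):ℂ) with hlu
      set lv : ℂ := ((Real.log (1-u):ℝ):ℂ) with hlv
      set S : ℂ := ∑' k : ℕ,
        poch a k * poch b k / (poch c k * (Nat.factorial k:ℂ)) * ((x*u : ℝ):ℂ)^k with hS
      have l : Complex.exp ((1:ℂ)*lx) * Complex.exp ((a-μ-1)*(lx+lu)) *
            Complex.exp ((μ-1)*(lx+lv))
          = Complex.exp ((a-1)*lx) *
            (Complex.exp ((a-μ-1)*lu) * Complex.exp ((μ-1)*lv)) := by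
        rw [← Complex.exp_add, ← Complex.exp_add, ← Complex.exp_add, ← Complex.exp_add]
        congr 1; ring
      linear_combination (S / Complex.Gamma μ) * l
    rw [setIntegral_congr_fun measurableSet_Ioo hpt, integral_const_mul,
      lemD a b c μ hμ hB hc1 hx0.le hx1]
    have hhyp2 : hypF (a-μ) b c x = ∑' k : ℕ,
        poch (a-μ) k * poch b k / (poch c k * (Nat.factorial k:ℂ)) * (x:ℂ)^k := by
      rw [hypF, if_pos hx0.le]
    rw [hhyp2, abs_of_pos hx0]
    exact alg_pos _ _ _ _ _ hGμ
end

section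
/- Let a, b, c, μ ∈ ℂ and let x, y be real numbers with 0 < y < x. Then y^{1-c} · L_{1-a,1-b,2-c;y}( y ↦ y^{c-1}(x-y)^{μ-1} ) = x^{c+μ-1} · L_{a,b,c+μ;x}( x ↦ x^{1-c-μ}(x-y)^{μ-1} ), where on the left-hand side the operator acts in the variable y (with x held fixed) and on the right-hand side it acts in the variable x (with y held fixed). This is the transmutation identity underlying Bateman's fractional integral formula. -/
open MeasureTheory Set Complex Filter

lemma hasDerivAt_left (p q : ℂ) (x t : ℝ) (ht : 0 < t) (htx : t < x) :
    HasDerivAt (fun t : ℝ => (t : ℂ) ^ p * ((x - t : ℝ) : ℂ) ^ q)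
      (p * (t : ℂ) ^ (p - 1) * ((x - t : ℝ) : ℂ) ^ q
        - q * (t : ℂ) ^ p * ((x - t : ℝ) : ℂ) ^ (q - 1)) t := by
  have hp : HasDerivAt (fun z : ℂ => z ^ p) (p * (t : ℂ) ^ (p - 1)) (t : ℂ) :=
    (Complex.hasStrictDerivAt_cpow_const (Complex.ofReal_mem_slitPlane.2 ht)).hasDerivAt
  have hp' : HasDerivAt (fun t : ℝ => ((t : ℂ)) ^ p) (p * (t : ℂ) ^ (p - 1)) t :=
    hp.comp_ofReal
  have hq : HasDerivAt (fun z : ℂ => ((x : ℂ) - z) ^ q)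
      (q * ((x : ℂ) - (t : ℂ)) ^ (q - 1) * (0 - 1)) (t : ℂ) :=
    HasDerivAt.cpow_const ((hasDerivAt_const _ _).sub (hasDerivAt_id _))
      (by rw [show (x : ℂ) - (t : ℂ) = ((x - t : ℝ) : ℂ) by push_cast; ring]
          exact Complex.ofReal_mem_slitPlane.2 (by linarith))
  have hq' : HasDerivAt (fun t : ℝ => ((x : ℂ) - (t : ℂ)) ^ q)
      (q * ((x : ℂ) - (t : ℂ)) ^ (q - 1) * (0 - 1)) t := hq.comp_ofReal
  have hm := hp'.mul hq'
  have hcast : ∀ u : ℝ, ((x - u : ℝ) : ℂ) = (x : ℂ) - (u : ℂ) := fun u => by push_cast; ring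
  simp only [hcast]
  convert hm using 1
  · rfl
  · rfl
  · ring

lemma hasDerivAt_right (p q : ℂ) (y s : ℝ) (hy : 0 < y) (hs : y < s) :
    HasDerivAt (fun s : ℝ => (s : ℂ) ^ p * ((s - y : ℝ) : ℂ) ^ q)
      (p * (s : ℂ) ^ (p - 1) * ((s - y : ℝ) : ℂ) ^ q
        + q * (s : ℂ) ^ p * ((s - y : ℝ) : ℂ) ^ (q - 1)) s := by
  have hp : HasDerivAt (fun z : ℂ => z ^ p) (p * (s : ℂ) ^ (p - 1)) (s : ℂ) :=
    (Complex.hasStrictDerivAt_cpow_const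
      (Complex.ofReal_mem_slitPlane.2 (by linarith))).hasDerivAt
  have hp' : HasDerivAt (fun s : ℝ => ((s : ℂ)) ^ p) (p * (s : ℂ) ^ (p - 1)) s :=
    hp.comp_ofReal
  have hq : HasDerivAt (fun z : ℂ => (z - (y : ℂ)) ^ q)
      (q * ((s : ℂ) - (y : ℂ)) ^ (q - 1) * (1 - 0)) (s : ℂ) :=
    HasDerivAt.cpow_const ((hasDerivAt_id _).sub (hasDerivAt_const _ _))
      (by rw [show (s : ℂ) - (y : ℂ) = ((s - y : ℝ) : ℂ) by push_cast; ring]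
          exact Complex.ofReal_mem_slitPlane.2 (by linarith))
  have hq' : HasDerivAt (fun s : ℝ => ((s : ℂ) - (y : ℂ)) ^ q)
      (q * ((s : ℂ) - (y : ℂ)) ^ (q - 1) * (1 - 0)) s := hq.comp_ofReal
  have hm := hp'.mul hq'
  have hcast : ∀ u : ℝ, ((u - y : ℝ) : ℂ) = (u : ℂ) - (y : ℂ) := fun u => by push_cast; ring
  simp only [hcast]
  convert hm using 1
  · rfl
  · rfl
  · ring

/-- The hypergeometric differential operator
`(L_{a,b,c} f)(x) = x(1-x) f''(x) + (c-(a+b+1)x) f'(x) - ab f(x)`. -/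
noncomputable def hypL (a b c : ℂ) (f : ℝ → ℂ) (x : ℝ) : ℂ :=
  (x : ℂ) * (1 - x) * deriv (deriv f) x + (c - (a + b + 1) * x) * deriv f x - a * b * f x

set_option maxHeartbeats 1000000 in
/-- The transmutation identity underlying Bateman's fractional integral formula:
`y^{1-c} L_{1-a,1-b,2-c;y}(y^{c-1}(x-y)^{μ-1}) = x^{c+μ-1} L_{a,b,c+μ;x}(x^{1-c-μ}(x-y)^{μ-1})`
for `0 < y < x`. -/
theorem stmt_8 (a b c μ : ℂ) (x y : ℝ) (hy : 0 < y) (hyx : y < x) :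
    (y : ℂ) ^ (1 - c) *
      hypL (1 - a) (1 - b) (2 - c)
        (fun t : ℝ => (t : ℂ) ^ (c - 1) * ((x - t : ℝ) : ℂ) ^ (μ - 1)) y
    = (x : ℂ) ^ (c + μ - 1) *
      hypL a b (c + μ)
        (fun s : ℝ => (s : ℂ) ^ (1 - c - μ) * ((s - y : ℝ) : ℂ) ^ (μ - 1)) x := by
  have hx : (0 : ℝ) < x := hy.trans hyx
  have hy0 : (y : ℂ) ≠ 0 := Complex.ofReal_ne_zero.2 hy.ne'
  have hx0 : (x : ℂ) ≠ 0 := Complex.ofReal_ne_zero.2 hx.ne'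
  have hw0 : ((x - y : ℝ) : ℂ) ≠ 0 := Complex.ofReal_ne_zero.2 (by linarith)
  -- derivatives of the left function
  have hDf : ∀ t ∈ Ioo (0 : ℝ) x,
      HasDerivAt (fun t : ℝ => (t : ℂ) ^ (c - 1) * ((x - t : ℝ) : ℂ) ^ (μ - 1))
        ((c - 1) * (t : ℂ) ^ (c - 1 - 1) * ((x - t : ℝ) : ℂ) ^ (μ - 1)
          - (μ - 1) * (t : ℂ) ^ (c - 1) * ((x - t : ℝ) : ℂ) ^ (μ - 1 - 1)) t :=
    fun t ht => hasDerivAt_left _ _ _ _ ht.1 ht.2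
  have hmemf : Ioo (0 : ℝ) x ∈ nhds y := Ioo_mem_nhds hy hyx
  have hd1 : deriv (fun t : ℝ => (t : ℂ) ^ (c - 1) * ((x - t : ℝ) : ℂ) ^ (μ - 1)) y
      = (c - 1) * (y : ℂ) ^ (c - 1 - 1) * ((x - y : ℝ) : ℂ) ^ (μ - 1)
        - (μ - 1) * (y : ℂ) ^ (c - 1) * ((x - y : ℝ) : ℂ) ^ (μ - 1 - 1) :=
    (hDf y ⟨hy, hyx⟩).deriv
  have hev : deriv (fun t : ℝ => (t : ℂ) ^ (c - 1) * ((x - t : ℝ) : ℂ) ^ (μ - 1)) =ᶠ[nhds y]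
      (fun t : ℝ => (c - 1) * ((t : ℂ) ^ (c - 1 - 1) * ((x - t : ℝ) : ℂ) ^ (μ - 1))
        - (μ - 1) * ((t : ℂ) ^ (c - 1) * ((x - t : ℝ) : ℂ) ^ (μ - 1 - 1))) :=
    eventually_of_mem hmemf (fun t ht => by rw [(hDf t ht).deriv]; ring)
  have hD2 : HasDerivAt
      (fun t : ℝ => (c - 1) * ((t : ℂ) ^ (c - 1 - 1) * ((x - t : ℝ) : ℂ) ^ (μ - 1))
        - (μ - 1) * ((t : ℂ) ^ (c - 1) * ((x - t : ℝ) : ℂ) ^ (μ - 1 - 1)))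
      ((c - 1) * ((c - 1 - 1) * (y : ℂ) ^ (c - 1 - 1 - 1) * ((x - y : ℝ) : ℂ) ^ (μ - 1)
          - (μ - 1) * (y : ℂ) ^ (c - 1 - 1) * ((x - y : ℝ) : ℂ) ^ (μ - 1 - 1))
        - (μ - 1) * ((c - 1) * (y : ℂ) ^ (c - 1 - 1) * ((x - y : ℝ) : ℂ) ^ (μ - 1 - 1)
          - (μ - 1 - 1) * (y : ℂ) ^ (c - 1) * ((x - y : ℝ) : ℂ) ^ (μ - 1 - 1 - 1))) y :=
    ((hasDerivAt_left _ _ _ _ hy hyx).const_mul _).sub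
      ((hasDerivAt_left _ _ _ _ hy hyx).const_mul _)
  have hd2 : deriv (deriv (fun t : ℝ => (t : ℂ) ^ (c - 1) * ((x - t : ℝ) : ℂ) ^ (μ - 1))) y
      = (c - 1) * ((c - 1 - 1) * (y : ℂ) ^ (c - 1 - 1 - 1) * ((x - y : ℝ) : ℂ) ^ (μ - 1)
          - (μ - 1) * (y : ℂ) ^ (c - 1 - 1) * ((x - y : ℝ) : ℂ) ^ (μ - 1 - 1))
        - (μ - 1) * ((c - 1) * (y : ℂ) ^ (c - 1 - 1) * ((x - y : ℝ) : ℂ) ^ (μ - 1 - 1)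
          - (μ - 1 - 1) * (y : ℂ) ^ (c - 1) * ((x - y : ℝ) : ℂ) ^ (μ - 1 - 1 - 1)) := by
    rw [hev.deriv_eq]; exact hD2.deriv
  -- derivatives of the right function
  have hDg : ∀ s ∈ Ioi y,
      HasDerivAt (fun s : ℝ => (s : ℂ) ^ (1 - c - μ) * ((s - y : ℝ) : ℂ) ^ (μ - 1))
        ((1 - c - μ) * (s : ℂ) ^ (1 - c - μ - 1) * ((s - y : ℝ) : ℂ) ^ (μ - 1)
          + (μ - 1) * (s : ℂ) ^ (1 - c - μ) * ((s - y : ℝ) : ℂ) ^ (μ - 1 - 1)) s :=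
    fun s hs => hasDerivAt_right _ _ _ _ hy hs
  have hmemg : Ioi y ∈ nhds x := Ioi_mem_nhds hyx
  have he1 : deriv (fun s : ℝ => (s : ℂ) ^ (1 - c - μ) * ((s - y : ℝ) : ℂ) ^ (μ - 1)) x
      = (1 - c - μ) * (x : ℂ) ^ (1 - c - μ - 1) * ((x - y : ℝ) : ℂ) ^ (μ - 1)
        + (μ - 1) * (x : ℂ) ^ (1 - c - μ) * ((x - y : ℝ) : ℂ) ^ (μ - 1 - 1) :=
    (hDg x hyx).deriv
  have hevg : deriv (fun s : ℝ => (s : ℂ) ^ (1 - c - μ) * ((s - y : ℝ) : ℂ) ^ (μ - 1)) =ᶠ[nhds x]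
      (fun s : ℝ => (1 - c - μ) * ((s : ℂ) ^ (1 - c - μ - 1) * ((s - y : ℝ) : ℂ) ^ (μ - 1))
        + (μ - 1) * ((s : ℂ) ^ (1 - c - μ) * ((s - y : ℝ) : ℂ) ^ (μ - 1 - 1))) :=
    eventually_of_mem hmemg (fun s hs => by rw [(hDg s hs).deriv]; ring)
  have hE2 : HasDerivAt
      (fun s : ℝ => (1 - c - μ) * ((s : ℂ) ^ (1 - c - μ - 1) * ((s - y : ℝ) : ℂ) ^ (μ - 1))
        + (μ - 1) * ((s : ℂ) ^ (1 - c - μ) * ((s - y : ℝ) : ℂ) ^ (μ - 1 - 1)))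
      ((1 - c - μ) * ((1 - c - μ - 1) * (x : ℂ) ^ (1 - c - μ - 1 - 1) * ((x - y : ℝ) : ℂ) ^ (μ - 1)
          + (μ - 1) * (x : ℂ) ^ (1 - c - μ - 1) * ((x - y : ℝ) : ℂ) ^ (μ - 1 - 1))
        + (μ - 1) * ((1 - c - μ) * (x : ℂ) ^ (1 - c - μ - 1) * ((x - y : ℝ) : ℂ) ^ (μ - 1 - 1)
          + (μ - 1 - 1) * (x : ℂ) ^ (1 - c - μ) * ((x - y : ℝ) : ℂ) ^ (μ - 1 - 1 - 1))) x :=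
    ((hasDerivAt_right _ _ _ _ hy hyx).const_mul _).add
      ((hasDerivAt_right _ _ _ _ hy hyx).const_mul _)
  have he2 : deriv (deriv (fun s : ℝ => (s : ℂ) ^ (1 - c - μ) * ((s - y : ℝ) : ℂ) ^ (μ - 1))) x
      = (1 - c - μ) * ((1 - c - μ - 1) * (x : ℂ) ^ (1 - c - μ - 1 - 1) * ((x - y : ℝ) : ℂ) ^ (μ - 1)
          + (μ - 1) * (x : ℂ) ^ (1 - c - μ - 1) * ((x - y : ℝ) : ℂ) ^ (μ - 1 - 1))
        + (μ - 1) * ((1 - c - μ) * (x : ℂ) ^ (1 - c - μ - 1) * ((x - y : ℝ) : ℂ) ^ (μ - 1 - 1)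
          + (μ - 1 - 1) * (x : ℂ) ^ (1 - c - μ) * ((x - y : ℝ) : ℂ) ^ (μ - 1 - 1 - 1)) := by
    rw [hevg.deriv_eq]; exact hE2.deriv
  -- power manipulation helpers
  have hxy0 : (x : ℂ) - (y : ℂ) ≠ 0 := by
    intro h
    apply hy.ne'
    have hxy : (x : ℂ) = (y : ℂ) := by linear_combination h
    have := Complex.ofReal_injective hxy
    linarith
  have stepY : ∀ s : ℂ, (y : ℂ) ^ s = (y : ℂ) ^ (s - 1) * (y : ℂ) := fun s => by
    conv_lhs => rw [show s = s - 1 + 1 by ring]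
    rw [Complex.cpow_add _ _ hy0, Complex.cpow_one]
  have stepX : ∀ s : ℂ, (x : ℂ) ^ s = (x : ℂ) ^ (s - 1) * (x : ℂ) := fun s => by
    conv_lhs => rw [show s = s - 1 + 1 by ring]
    rw [Complex.cpow_add _ _ hx0, Complex.cpow_one]
  have stepW : ∀ s : ℂ, ((x : ℂ) - (y : ℂ)) ^ s
      = ((x : ℂ) - (y : ℂ)) ^ (s - 1) * ((x : ℂ) - (y : ℂ)) := fun s => by
    conv_lhs => rw [show s = s - 1 + 1 by ring]
    rw [Complex.cpow_add _ _ hxy0, Complex.cpow_one]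
  have eqY1 : (y : ℂ) ^ (c - 1) = (y : ℂ) ^ (c - 1 - 1 - 1) * ((y : ℂ) * (y : ℂ)) := by
    rw [stepY (c - 1), stepY (c - 1 - 1)]; ring
  have eqY2 : (y : ℂ) ^ (c - 1 - 1) = (y : ℂ) ^ (c - 1 - 1 - 1) * (y : ℂ) := stepY (c - 1 - 1)
  have eqX1 : (x : ℂ) ^ (1 - c - μ)
      = (x : ℂ) ^ (1 - c - μ - 1 - 1) * ((x : ℂ) * (x : ℂ)) := by
    rw [stepX (1 - c - μ), stepX (1 - c - μ - 1)]; ring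
  have eqX2 : (x : ℂ) ^ (1 - c - μ - 1) = (x : ℂ) ^ (1 - c - μ - 1 - 1) * (x : ℂ) :=
    stepX (1 - c - μ - 1)
  have eqW1 : ((x : ℂ) - (y : ℂ)) ^ (μ - 1)
      = ((x : ℂ) - (y : ℂ)) ^ (μ - 1 - 1 - 1) * (((x : ℂ) - (y : ℂ)) * ((x : ℂ) - (y : ℂ))) := by
    rw [stepW (μ - 1), stepW (μ - 1 - 1)]; ring
  have eqW2 : ((x : ℂ) - (y : ℂ)) ^ (μ - 1 - 1)
      = ((x : ℂ) - (y : ℂ)) ^ (μ - 1 - 1 - 1) * ((x : ℂ) - (y : ℂ)) := stepW (μ - 1 - 1)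
  have relY : (y : ℂ) ^ (1 - c) * ((y : ℂ) ^ (c - 1 - 1 - 1) * ((y : ℂ) * (y : ℂ))) = 1 := by
    calc (y : ℂ) ^ (1 - c) * ((y : ℂ) ^ (c - 1 - 1 - 1) * ((y : ℂ) * (y : ℂ)))
        = ((y : ℂ) ^ (1 - c) * (y : ℂ) ^ (c - 1 - 1 - 1)) * ((y : ℂ) * (y : ℂ)) := by ring
      _ = (y : ℂ) ^ ((1 - c) + (c - 1 - 1 - 1)) * ((y : ℂ) * (y : ℂ)) := by
          rw [Complex.cpow_add _ _ hy0]
      _ = (y : ℂ) ^ (-(1 + 1) : ℂ) * ((y : ℂ) * (y : ℂ)) := by rw [show (1 - c) + (c - 1 - 1 - 1) = (-(1 + 1) : ℂ) by ring]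
      _ = ((y : ℂ) ^ ((1 : ℂ) + 1))⁻¹ * ((y : ℂ) * (y : ℂ)) := by rw [Complex.cpow_neg]
      _ = ((y : ℂ) * (y : ℂ))⁻¹ * ((y : ℂ) * (y : ℂ)) := by
          rw [Complex.cpow_add _ _ hy0, Complex.cpow_one]
      _ = 1 := inv_mul_cancel₀ (mul_ne_zero hy0 hy0)
  have relX : (x : ℂ) ^ (c + μ - 1) * ((x : ℂ) ^ (1 - c - μ - 1 - 1) * ((x : ℂ) * (x : ℂ))) = 1 := by
    calc (x : ℂ) ^ (c + μ - 1) * ((x : ℂ) ^ (1 - c - μ - 1 - 1) * ((x : ℂ) * (x : ℂ)))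
        = ((x : ℂ) ^ (c + μ - 1) * (x : ℂ) ^ (1 - c - μ - 1 - 1)) * ((x : ℂ) * (x : ℂ)) := by ring
      _ = (x : ℂ) ^ ((c + μ - 1) + (1 - c - μ - 1 - 1)) * ((x : ℂ) * (x : ℂ)) := by
          rw [Complex.cpow_add _ _ hx0]
      _ = (x : ℂ) ^ (-(1 + 1) : ℂ) * ((x : ℂ) * (x : ℂ)) := by rw [show (c + μ - 1) + (1 - c - μ - 1 - 1) = (-(1 + 1) : ℂ) by ring]
      _ = ((x : ℂ) ^ ((1 : ℂ) + 1))⁻¹ * ((x : ℂ) * (x : ℂ)) := by rw [Complex.cpow_neg]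
      _ = ((x : ℂ) * (x : ℂ))⁻¹ * ((x : ℂ) * (x : ℂ)) := by
          rw [Complex.cpow_add _ _ hx0, Complex.cpow_one]
      _ = 1 := inv_mul_cancel₀ (mul_ne_zero hx0 hx0)
  -- the two reduced sides
  have L : (y : ℂ) * (y : ℂ) *
      ((y : ℂ) ^ (1 - c) *
        hypL (1 - a) (1 - b) (2 - c)
          (fun t : ℝ => (t : ℂ) ^ (c - 1) * ((x - t : ℝ) : ℂ) ^ (μ - 1)) y)
      = ((x : ℂ) - (y : ℂ)) ^ (μ - 1 - 1 - 1) *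
        ((y : ℂ) * (1 - (y : ℂ)) *
            ((c - 1) * (c - 1 - 1) * (((x : ℂ) - (y : ℂ)) * ((x : ℂ) - (y : ℂ)))
              - 2 * (c - 1) * (μ - 1) * (y : ℂ) * ((x : ℂ) - (y : ℂ))
              + (μ - 1) * (μ - 1 - 1) * ((y : ℂ) * (y : ℂ)))
          + (2 - c - (3 - a - b) * (y : ℂ)) *
            ((c - 1) * (y : ℂ) * (((x : ℂ) - (y : ℂ)) * ((x : ℂ) - (y : ℂ)))
              - (μ - 1) * ((y : ℂ) * (y : ℂ)) * ((x : ℂ) - (y : ℂ)))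
          - (1 - a) * (1 - b) * ((y : ℂ) * (y : ℂ)) *
            (((x : ℂ) - (y : ℂ)) * ((x : ℂ) - (y : ℂ)))) := by
    simp only [hypL]
    rw [hd1, hd2]
    simp only [Complex.ofReal_sub]
    rw [eqY1, eqY2, eqW1, eqW2]
    calc _ = ((y : ℂ) ^ (1 - c) * ((y : ℂ) ^ (c - 1 - 1 - 1) * ((y : ℂ) * (y : ℂ)))) *
        (((x : ℂ) - (y : ℂ)) ^ (μ - 1 - 1 - 1) *
        ((y : ℂ) * (1 - (y : ℂ)) *
            ((c - 1) * (c - 1 - 1) * (((x : ℂ) - (y : ℂ)) * ((x : ℂ) - (y : ℂ)))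
              - 2 * (c - 1) * (μ - 1) * (y : ℂ) * ((x : ℂ) - (y : ℂ))
              + (μ - 1) * (μ - 1 - 1) * ((y : ℂ) * (y : ℂ)))
          + (2 - c - (3 - a - b) * (y : ℂ)) *
            ((c - 1) * (y : ℂ) * (((x : ℂ) - (y : ℂ)) * ((x : ℂ) - (y : ℂ)))
              - (μ - 1) * ((y : ℂ) * (y : ℂ)) * ((x : ℂ) - (y : ℂ)))
          - (1 - a) * (1 - b) * ((y : ℂ) * (y : ℂ)) *
            (((x : ℂ) - (y : ℂ)) * ((x : ℂ) - (y : ℂ))))) := by ring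
      _ = _ := by rw [relY]; ring
  have R : (x : ℂ) * (x : ℂ) *
      ((x : ℂ) ^ (c + μ - 1) *
        hypL a b (c + μ)
          (fun s : ℝ => (s : ℂ) ^ (1 - c - μ) * ((s - y : ℝ) : ℂ) ^ (μ - 1)) x)
      = ((x : ℂ) - (y : ℂ)) ^ (μ - 1 - 1 - 1) *
        ((x : ℂ) * (1 - (x : ℂ)) *
            ((1 - c - μ) * (1 - c - μ - 1) * (((x : ℂ) - (y : ℂ)) * ((x : ℂ) - (y : ℂ)))
              + 2 * (1 - c - μ) * (μ - 1) * (x : ℂ) * ((x : ℂ) - (y : ℂ))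
              + (μ - 1) * (μ - 1 - 1) * ((x : ℂ) * (x : ℂ)))
          + (c + μ - (a + b + 1) * (x : ℂ)) *
            ((1 - c - μ) * (x : ℂ) * (((x : ℂ) - (y : ℂ)) * ((x : ℂ) - (y : ℂ)))
              + (μ - 1) * ((x : ℂ) * (x : ℂ)) * ((x : ℂ) - (y : ℂ)))
          - a * b * ((x : ℂ) * (x : ℂ)) *
            (((x : ℂ) - (y : ℂ)) * ((x : ℂ) - (y : ℂ)))) := by
    simp only [hypL]
    rw [he1, he2]
    simp only [Complex.ofReal_sub]
    rw [eqX1, eqX2, eqW1, eqW2]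
    calc _ = ((x : ℂ) ^ (c + μ - 1) * ((x : ℂ) ^ (1 - c - μ - 1 - 1) * ((x : ℂ) * (x : ℂ)))) *
        (((x : ℂ) - (y : ℂ)) ^ (μ - 1 - 1 - 1) *
        ((x : ℂ) * (1 - (x : ℂ)) *
            ((1 - c - μ) * (1 - c - μ - 1) * (((x : ℂ) - (y : ℂ)) * ((x : ℂ) - (y : ℂ)))
              + 2 * (1 - c - μ) * (μ - 1) * (x : ℂ) * ((x : ℂ) - (y : ℂ))
              + (μ - 1) * (μ - 1 - 1) * ((x : ℂ) * (x : ℂ)))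
          + (c + μ - (a + b + 1) * (x : ℂ)) *
            ((1 - c - μ) * (x : ℂ) * (((x : ℂ) - (y : ℂ)) * ((x : ℂ) - (y : ℂ)))
              + (μ - 1) * ((x : ℂ) * (x : ℂ)) * ((x : ℂ) - (y : ℂ)))
          - a * b * ((x : ℂ) * (x : ℂ)) *
            (((x : ℂ) - (y : ℂ)) * ((x : ℂ) - (y : ℂ))))) := by ring
      _ = _ := by rw [relX]; ring
  refine mul_left_cancel₀
    (mul_ne_zero (mul_ne_zero hy0 hy0) (mul_ne_zero hx0 hx0)) ?_
  linear_combination ((x : ℂ) * (x : ℂ)) * L - ((y : ℂ) * (y : ℂ)) * R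
end

section
/- Let μ, ν ∈ ℂ with Re(1-ν) > Re μ > 0, let -∞ < m < M ≤ ∞, let x be a real number with x < m, and let f : (m,M) → ℂ be a measurable function such that ∫_m^M |f(z)| (z-x)^{Re μ + Re ν - 1} dz < ∞. Then ∫_{-∞}^{x} ( ∫_m^M f(z) Γ(1-ν) (z-y)^{ν-1} dz ) · (x-y)^{μ-1}/Γ(μ) dy = ∫_m^M f(z) Γ(1-μ-ν) (z-x)^{μ+ν-1} dz; that is, the fractional integral of order μ of a generalized Stieltjes transform of order 1-ν of f equals the generalized Stieltjes transform of order 1-μ-ν of f. -/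
open MeasureTheory Set Complex Filter


lemma cpow_pos_exp_s18 {r : ℝ} (hr : 0 < r) (w : ℂ) :
    (r : ℂ) ^ w = Complex.exp ((Real.log r : ℂ) * w) := by
  rw [Complex.cpow_def_of_ne_zero (by exact_mod_cast hr.ne') w, Complex.ofReal_log hr.le]

lemma ofReal_pos_exp_s18 {r : ℝ} (hr : 0 < r) :
    (r : ℂ) = Complex.exp ((Real.log r : ℂ)) := by
  rw [← Complex.ofReal_exp, Real.exp_log hr]

lemma key (μ ν : ℂ) (hμ : 0 < μ.re) (hb : μ.re + ν.re < 1) {c : ℝ} (hc : 0 < c) :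
    IntegrableOn (fun t : ℝ => ((t : ℝ) : ℂ) ^ (μ - 1) * ((c + t : ℝ) : ℂ) ^ (ν - 1)) (Ioi 0) ∧
    ∫ t in Ioi (0:ℝ), ((t : ℝ) : ℂ) ^ (μ - 1) * ((c + t : ℝ) : ℂ) ^ (ν - 1)
      = Complex.Gamma μ * Complex.Gamma (1 - μ - ν) / Complex.Gamma (1 - ν)
        * (c : ℂ) ^ (μ + ν - 1) := by
  have hv : 0 < (1 - μ - ν).re := by
    simp only [Complex.sub_re, Complex.one_re]; linarith
  set g : ℝ → ℝ := fun s => c * s / (1 - s) with hg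
  have himg : g '' Ioo 0 1 = Ioi 0 := by
    ext t
    constructor
    · rintro ⟨s, ⟨hs0, hs1⟩, rfl⟩
      exact mem_Ioi.2 (div_pos (by positivity) (by linarith))
    · intro ht
      have ht' : (0:ℝ) < t := ht
      refine ⟨t / (c + t), ⟨by positivity, ?_⟩, ?_⟩
      · rw [div_lt_one (by linarith)]; linarith
      · have hct : c + t ≠ 0 := by positivity
        show c * (t / (c + t)) / (1 - t / (c + t)) = t
        field_simp
        simp [hc.ne']
  have hderiv : ∀ s ∈ Ioo (0:ℝ) 1, HasDerivWithinAt g (c / (1 - s) ^ 2) (Ioo 0 1) s := by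
    intro s hs
    have h1 : (1:ℝ) - s ≠ 0 := by have h2 := hs.2; intro h; nlinarith
    refine HasDerivAt.hasDerivWithinAt ?_
    have h := ((hasDerivAt_id s).const_mul c).div ((hasDerivAt_id s).const_sub 1) h1
    refine h.congr_deriv ?_
    simp only [id]
    rw [div_eq_div_iff (by positivity) (by positivity)]
    ring
  have hinj : InjOn g (Ioo 0 1) := by
    intro a ha b hb hab
    have h1 : (1:ℝ) - a ≠ 0 := by have := ha.2; intro h; linarith [(by linarith : a = 1)]
    have h2 : (1:ℝ) - b ≠ 0 := by have := hb.2; intro h; linarith [(by linarith : b = 1)]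
    have : c * a * (1 - b) = c * b * (1 - a) := by
      simp only [hg] at hab
      field_simp at hab
      linear_combination c * hab
    nlinarith [hc]
  have hpt : ∀ s ∈ Ioo (0:ℝ) 1,
      |c / (1 - s) ^ 2| • (((g s : ℝ) : ℂ) ^ (μ - 1) * ((c + g s : ℝ) : ℂ) ^ (ν - 1))
        = (c : ℂ) ^ (μ + ν - 1) *
          ((s : ℂ) ^ (μ - 1) * (1 - (s : ℂ)) ^ ((1 - μ - ν) - 1)) := by
    intro s hs
    obtain ⟨hs0, hs1⟩ := hs
    have h1s : (0:ℝ) < 1 - s := by linarith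
    have hgs : 0 < g s := div_pos (by positivity) h1s
    have hcgs : c + g s = c / (1 - s) := by
      simp only [hg]
      field_simp
      ring
    have habs : |c / (1 - s) ^ 2| = c / (1 - s) ^ 2 := abs_of_pos (by positivity)
    have h1sC : (1 : ℂ) - (s : ℂ) = ((1 - s : ℝ) : ℂ) := by push_cast; ring
    rw [habs, real_smul, hcgs, h1sC,
      cpow_pos_exp_s18 hgs, cpow_pos_exp_s18 (by positivity : (0:ℝ) < c / (1 - s)),
      cpow_pos_exp_s18 hc, cpow_pos_exp_s18 hs0, cpow_pos_exp_s18 h1s,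
      ofReal_pos_exp_s18 (by positivity : (0:ℝ) < c / (1 - s) ^ 2),
      ← Complex.exp_add, ← Complex.exp_add, ← Complex.exp_add, ← Complex.exp_add]
    congr 1
    have hlg : Real.log (g s) = Real.log c + Real.log s - Real.log (1 - s) := by
      rw [hg]
      rw [Real.log_div (by positivity) h1s.ne', Real.log_mul hc.ne' hs0.ne']
    have hl2 : Real.log (c / (1 - s)) = Real.log c - Real.log (1 - s) :=
      Real.log_div hc.ne' h1s.ne'
    have hl3 : Real.log (c / (1 - s) ^ 2) = Real.log c - 2 * Real.log (1 - s) := by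
      rw [Real.log_div hc.ne' (by positivity), Real.log_pow]
      push_cast; ring
    rw [hlg, hl2, hl3]
    push_cast
    ring
  have hbeta : IntegrableOn
      (fun s : ℝ => (s : ℂ) ^ (μ - 1) * (1 - (s : ℂ)) ^ ((1 - μ - ν) - 1)) (Ioo 0 1) := by
    have := (Complex.betaIntegral_convergent hμ hv)
    rw [intervalIntegrable_iff_integrableOn_Ioc_of_le zero_le_one] at this
    exact this.mono_set Ioo_subset_Ioc_self
  constructor
  · rw [← himg, integrableOn_image_iff_integrableOn_abs_deriv_smul measurableSet_Ioo hderiv hinj]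
    exact IntegrableOn.congr_fun (hbeta.const_mul _) (fun s hs => (hpt s hs).symm) measurableSet_Ioo
  · rw [← himg, integral_image_eq_integral_abs_deriv_smul measurableSet_Ioo hderiv hinj,
      setIntegral_congr_fun measurableSet_Ioo hpt, integral_const_mul]
    have hbval : ∫ s in Ioo (0:ℝ) 1, (s : ℂ) ^ (μ - 1) * (1 - (s : ℂ)) ^ ((1 - μ - ν) - 1)
        = Complex.betaIntegral μ (1 - μ - ν) := by
      rw [← integral_Ioc_eq_integral_Ioo, Complex.betaIntegral,
        intervalIntegral.integral_of_le zero_le_one]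
    rw [hbval]
    have hG : Complex.Gamma μ * Complex.Gamma (1 - μ - ν)
        = Complex.Gamma (1 - ν) * Complex.betaIntegral μ (1 - μ - ν) := by
      have := Complex.Gamma_mul_Gamma_eq_betaIntegral hμ hv
      rw [this]
      congr 2
      ring
    have hGν : Complex.Gamma (1 - ν) ≠ 0 := by
      apply Complex.Gamma_ne_zero_of_re_pos
      simp only [Complex.sub_re, Complex.one_re]; linarith
    rw [mul_comm]
    congr 1
    rw [eq_div_iff hGν, hG]
    ring

lemma refl_img (x : ℝ) : (fun t : ℝ => x - t) '' Ioi 0 = Iio x := by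
  ext y
  constructor
  · rintro ⟨t, ht, rfl⟩; exact sub_lt_self x ht
  · intro hy; exact ⟨x - y, by simpa using hy, by ring⟩

lemma refl_deriv (x : ℝ) : ∀ t ∈ Ioi (0:ℝ), HasDerivWithinAt (fun t : ℝ => x - t) (-1) (Ioi 0) t :=
  fun t _ => (((hasDerivAt_id t).const_sub x)).hasDerivWithinAt

lemma refl_inj (x : ℝ) : InjOn (fun t : ℝ => x - t) (Ioi 0) :=
  fun a _ b _ h => by simpa using h

lemma refl_integral {E : Type*} [NormedAddCommGroup E] [NormedSpace ℝ E] (x : ℝ) (g : ℝ → E) :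
    ∫ y in Iio x, g y = ∫ t in Ioi (0:ℝ), g (x - t) := by
  rw [← refl_img x, integral_image_eq_integral_abs_deriv_smul measurableSet_Ioi
    (refl_deriv x) (refl_inj x) g]
  simp

lemma refl_integrableOn {E : Type*} [NormedAddCommGroup E] [NormedSpace ℝ E] (x : ℝ) (g : ℝ → E)
    (h : IntegrableOn (fun t => g (x - t)) (Ioi 0)) : IntegrableOn g (Iio x) := by
  rw [← refl_img x, integrableOn_image_iff_integrableOn_abs_deriv_smul measurableSet_Ioi
    (refl_deriv x) (refl_inj x) g]
  simpa using h

/-- Complex main computation for fixed z. -/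
lemma main2 (μ ν : ℂ) (hμ : 0 < μ.re) (hb : μ.re + ν.re < 1) {x z : ℝ} (hxz : x < z) :
    IntegrableOn (fun y : ℝ => ((z - y : ℝ) : ℂ) ^ (ν - 1) * ((x - y : ℝ) : ℂ) ^ (μ - 1))
      (Iio x) ∧
    ∫ y in Iio x, ((z - y : ℝ) : ℂ) ^ (ν - 1) * ((x - y : ℝ) : ℂ) ^ (μ - 1)
      = Complex.Gamma μ * Complex.Gamma (1 - μ - ν) / Complex.Gamma (1 - ν)
        * ((z - x : ℝ) : ℂ) ^ (μ + ν - 1) := by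
  have hc : 0 < z - x := by linarith
  obtain ⟨hk1, hk2⟩ := key μ ν hμ hb hc
  have heq : ∀ t : ℝ, ((z - (x - t) : ℝ) : ℂ) ^ (ν - 1) * ((x - (x - t) : ℝ) : ℂ) ^ (μ - 1)
      = ((t : ℝ) : ℂ) ^ (μ - 1) * ((z - x + t : ℝ) : ℂ) ^ (ν - 1) := by
    intro t
    rw [mul_comm]
    congr 3 <;> ring
  constructor
  · refine refl_integrableOn x _ ?_
    refine hk1.congr_fun (fun t _ => ?_) measurableSet_Ioi
    rw [heq t]
  · rw [refl_integral x, setIntegral_congr_fun measurableSet_Ioi (fun t _ => heq t), hk2]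

/-- Real-valued version via taking real parts. -/
lemma keyR (a b : ℝ) (ha : 0 < a) (hab : a + b < 1) {c : ℝ} (hc : 0 < c) :
    IntegrableOn (fun t : ℝ => t ^ (a - 1) * (c + t) ^ (b - 1)) (Ioi 0) ∧
    ∫ t in Ioi (0:ℝ), t ^ (a - 1) * (c + t) ^ (b - 1)
      = Real.Gamma a * Real.Gamma (1 - a - b) / Real.Gamma (1 - b) * c ^ (a + b - 1) := by
  have h := key (a : ℂ) (b : ℂ) (by simpa using ha) (by simpa using hab) hc
  have heq : ∀ t ∈ Ioi (0:ℝ),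
      ((t : ℝ) : ℂ) ^ ((a : ℂ) - 1) * ((c + t : ℝ) : ℂ) ^ ((b : ℂ) - 1)
        = ((t ^ (a - 1) * (c + t) ^ (b - 1) : ℝ) : ℂ) := by
    intro t ht
    have ht' : (0:ℝ) < t := ht
    rw [Complex.ofReal_mul, Complex.ofReal_cpow ht'.le, Complex.ofReal_cpow (by linarith)]
    push_cast
    ring_nf
  constructor
  · have h1 : IntegrableOn (fun t : ℝ => ((t ^ (a - 1) * (c + t) ^ (b - 1) : ℝ) : ℂ)) (Ioi 0) :=
      h.1.congr_fun heq measurableSet_Ioi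
    refine IntegrableOn.congr_fun h1.re (fun t _ => ?_) measurableSet_Ioi
    simp
  · have h3 : ∫ t in Ioi (0:ℝ), ((t ^ (a - 1) * (c + t) ^ (b - 1) : ℝ) : ℂ)
        = ((Real.Gamma a * Real.Gamma (1 - a - b) / Real.Gamma (1 - b) * c ^ (a + b - 1) : ℝ) : ℂ) := by
      rw [← setIntegral_congr_fun measurableSet_Ioi heq, h.2]
      have e1 : (1 : ℂ) - (a:ℂ) - (b:ℂ) = ((1 - a - b : ℝ) : ℂ) := by push_cast; ring
      have e2 : (1 : ℂ) - (b:ℂ) = ((1 - b : ℝ) : ℂ) := by push_cast; ring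
      have e3 : ((a:ℂ) + (b:ℂ) - 1 : ℂ) = ((a + b - 1 : ℝ) : ℂ) := by push_cast; ring
      rw [e1, e2, e3, Complex.Gamma_ofReal, Complex.Gamma_ofReal, Complex.Gamma_ofReal,
        ← Complex.ofReal_cpow hc.le]
      push_cast
      ring
    rw [← Complex.ofReal_inj, ← h3]
    exact (integral_ofReal (𝕜 := ℂ) (f := fun t => t ^ (a-1) * (c+t)^(b-1)) (μ := volume.restrict (Ioi 0))).symm

lemma main2R (a b : ℝ) (ha : 0 < a) (hab : a + b < 1) {x z : ℝ} (hxz : x < z) :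
    ∫ y in Iio x, (z - y) ^ (b - 1) * (x - y) ^ (a - 1)
      = Real.Gamma a * Real.Gamma (1 - a - b) / Real.Gamma (1 - b) * (z - x) ^ (a + b - 1) := by
  have hc : 0 < z - x := by linarith
  obtain ⟨hk1, hk2⟩ := keyR a b ha hab hc
  rw [refl_integral x, ← hk2]
  refine setIntegral_congr_fun measurableSet_Ioi fun t ht => ?_
  rw [show z - (x - t) = z - x + t by ring, show x - (x - t) = t by ring, mul_comm]

/-- The fractional integral of order `μ` of a generalized Stieltjes transform of order
`1-ν` of `f` equals the generalized Stieltjes transform of order `1-μ-ν` of `f`. -/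
theorem stmt_18 (μ ν : ℂ) (hμν : μ.re < (1 - ν).re) (hμ : 0 < μ.re)
    (m : ℝ) (M : EReal) (hmM : (m : EReal) < M)
    (x : ℝ) (hxm : x < m) (f : ℝ → ℂ) (hf : Measurable f)
    (S : Set ℝ) (hS : S = {z : ℝ | m < z ∧ (z : EReal) < M})
    (hint : IntegrableOn (fun z : ℝ => ‖f z‖ * (z - x) ^ (μ.re + ν.re - 1)) S) :
    ∫ y in Iio x,
        (∫ z in S, f z * Complex.Gamma (1 - ν) * ((z - y : ℝ) : ℂ) ^ (ν - 1)) *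
          (((x - y : ℝ) : ℂ) ^ (μ - 1) / Complex.Gamma μ)
      = ∫ z in S, f z * Complex.Gamma (1 - μ - ν) * ((z - x : ℝ) : ℂ) ^ (μ + ν - 1) := by
  have h1ν : (1 - ν).re = 1 - ν.re := by simp [Complex.sub_re, Complex.one_re]
  have hab : μ.re + ν.re < 1 := by rw [h1ν] at hμν; linarith
  have hGμ : Complex.Gamma μ ≠ 0 := Complex.Gamma_ne_zero_of_re_pos hμ
  have hGν : Complex.Gamma (1 - ν) ≠ 0 :=
    Complex.Gamma_ne_zero_of_re_pos (by rw [h1ν]; linarith)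
  have hSmeas : MeasurableSet S := by
    have hoc : OrdConnected S := by
      rw [hS]
      constructor
      rintro p ⟨hp1, hp2⟩ q ⟨hq1, hq2⟩ r hr
      exact ⟨lt_of_lt_of_le hp1 hr.1, lt_of_le_of_lt (EReal.coe_le_coe_iff.2 hr.2) hq2⟩
    exact hoc.measurableSet
  set F' : ℝ → ℝ → ℂ := fun y z =>
    f z * Complex.Gamma (1 - ν) * ((z - y : ℝ) : ℂ) ^ (ν - 1) *
      (((x - y : ℝ) : ℂ) ^ (μ - 1) / Complex.Gamma μ) with hF'
  have hxz : ∀ z ∈ S, x < z := by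
    intro z hz
    rw [hS] at hz
    exact hxm.trans hz.1
  -- measurability
  have hmeas : AEStronglyMeasurable (Function.uncurry F')
      ((volume.restrict (Iio x)).prod (volume.restrict S)) := by
    have : Measurable (fun p : ℝ × ℝ =>
        f p.2 * Complex.Gamma (1 - ν) * ((p.2 - p.1 : ℝ) : ℂ) ^ (ν - 1) *
          (((x - p.1 : ℝ) : ℂ) ^ (μ - 1) / Complex.Gamma μ)) := by
      refine (((hf.comp measurable_snd).mul measurable_const).mul
        ((Complex.measurable_ofReal.comp (measurable_snd.sub measurable_fst)).pow
          measurable_const)).mul ?_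
      exact ((Complex.measurable_ofReal.comp
        (measurable_const.sub measurable_fst)).pow measurable_const).div measurable_const
    exact this.aestronglyMeasurable
  -- integrability of the double integral
  have hF : Integrable (Function.uncurry F')
      ((volume.restrict (Iio x)).prod (volume.restrict S)) := by
    refine (integrable_prod_iff' hmeas).2 ⟨?_, ?_⟩
    · refine (ae_restrict_iff' hSmeas).2 (ae_of_all _ fun z hz => ?_)
      have hm2 := (main2 μ ν hμ hab (hxz z hz)).1
      exact (hm2.const_mul (f z * Complex.Gamma (1 - ν) / Complex.Gamma μ)).congr
        (ae_of_all _ fun y => by simp only [Function.uncurry, hF']; ring)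
    · have hval : ∀ z ∈ S, (∫ y in Iio x, ‖F' y z‖)
          = (‖Complex.Gamma (1 - ν)‖ / ‖Complex.Gamma μ‖ *
              (Real.Gamma μ.re * Real.Gamma (1 - μ.re - ν.re) / Real.Gamma (1 - ν.re)))
            * (‖f z‖ * (z - x) ^ (μ.re + ν.re - 1)) := by
        intro z hz
        have hxzz := hxz z hz
        have h1 : ∫ y in Iio x, ‖F' y z‖
            = ∫ y in Iio x, (‖f z‖ * ‖Complex.Gamma (1 - ν)‖ / ‖Complex.Gamma μ‖) *
                ((z - y) ^ (ν.re - 1) * (x - y) ^ (μ.re - 1)) := by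
          refine setIntegral_congr_fun measurableSet_Iio fun y hy => ?_
          have hy' : y < x := hy
          have hA : ‖((z - y : ℝ) : ℂ) ^ (ν - 1)‖ = (z - y) ^ (ν.re - 1) := by
            rw [Complex.norm_cpow_eq_rpow_re_of_pos (by linarith)]
            norm_num
          have hB : ‖((x - y : ℝ) : ℂ) ^ (μ - 1)‖ = (x - y) ^ (μ.re - 1) := by
            rw [Complex.norm_cpow_eq_rpow_re_of_pos (by linarith)]
            norm_num
          rw [hF']
          simp only [norm_mul, norm_div, hA, hB]
          ring
        rw [h1, integral_const_mul, main2R μ.re ν.re hμ hab hxzz]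
        ring
      refine Integrable.congr (hint.const_mul (‖Complex.Gamma (1 - ν)‖ / ‖Complex.Gamma μ‖ *
          (Real.Gamma μ.re * Real.Gamma (1 - μ.re - ν.re) / Real.Gamma (1 - ν.re)))) ?_
      exact (ae_restrict_iff' hSmeas).2 (ae_of_all _ fun z hz => (hval z hz).symm)
  have hA : ∀ y : ℝ,
      (∫ z in S, f z * Complex.Gamma (1 - ν) * ((z - y : ℝ) : ℂ) ^ (ν - 1)) *
        (((x - y : ℝ) : ℂ) ^ (μ - 1) / Complex.Gamma μ) = ∫ z in S, F' y z :=
    fun y => (integral_mul_const _ _).symm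
  calc ∫ y in Iio x,
        (∫ z in S, f z * Complex.Gamma (1 - ν) * ((z - y : ℝ) : ℂ) ^ (ν - 1)) *
          (((x - y : ℝ) : ℂ) ^ (μ - 1) / Complex.Gamma μ)
      = ∫ y in Iio x, ∫ z in S, F' y z := by simp only [hA]
    _ = ∫ z in S, ∫ y in Iio x, F' y z := integral_integral_swap hF
    _ = ∫ z in S, f z * Complex.Gamma (1 - μ - ν) * ((z - x : ℝ) : ℂ) ^ (μ + ν - 1) := by
        refine setIntegral_congr_fun hSmeas fun z hz => ?_
        have hm := (main2 μ ν hμ hab (hxz z hz)).2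
        calc ∫ y in Iio x, F' y z
            = (f z * Complex.Gamma (1 - ν) / Complex.Gamma μ) *
              ∫ y in Iio x, ((z - y : ℝ) : ℂ) ^ (ν - 1) * ((x - y : ℝ) : ℂ) ^ (μ - 1) := by
              rw [← integral_const_mul]
              refine integral_congr_ae (ae_of_all _ fun y => ?_)
              rw [hF']; ring
          _ = (f z * Complex.Gamma (1 - ν) / Complex.Gamma μ) *
              (Complex.Gamma μ * Complex.Gamma (1 - μ - ν) / Complex.Gamma (1 - ν) *
                ((z - x : ℝ) : ℂ) ^ (μ + ν - 1)) := by rw [hm]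
          _ = f z * Complex.Gamma (1 - μ - ν) * ((z - x : ℝ) : ℂ) ^ (μ + ν - 1) := by
              field_simp
end

section
/- Let μ, ν ∈ ℂ with Re(1-ν) > Re μ > 0, let m ∈ ℝ, let x be a real number with x < m, and let f : (m,∞) → ℂ be a locally integrable function such that ∫_m^∞ |f(z)| (z-x)^{Re μ + Re ν - 1} dz < ∞. Then ∫_{m}^{∞} ( ∫_m^y f(z) (y-z)^{μ-1}/Γ(μ) dz ) · Γ(1-ν) (y-x)^{ν-1} dy = ∫_m^∞ f(z) Γ(1-μ-ν) (z-x)^{μ+ν-1} dz; that is, the generalized Stieltjes transform of order 1-ν of the fractional integral of order μ of f equals the generalized Stieltjes transform of order 1-μ-ν of f. -/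
open MeasureTheory Set Complex Filter

lemma measurable_cpow_const {α : Type*} [MeasurableSpace α] {g : α → ℂ} (hg : Measurable g)
    (w : ℂ) : Measurable fun a => g a ^ w := by
  have h : (fun a => g a ^ w) = fun a =>
      if g a = 0 then (if w = 0 then 1 else 0) else Complex.exp (Complex.log (g a) * w) := by
    ext a; rw [Complex.cpow_def]
  rw [h]
  exact Measurable.ite (hg (measurableSet_singleton 0)) measurable_const
    ((hg.clog.mul measurable_const).cexp)

lemma stieltjes_beta (u v : ℂ) (hu : 0 < u.re) (huv : 0 < (1 - u - v).re)
    {x b : ℝ} (hxb : x < b) :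
    IntegrableOn (fun y : ℝ => ((y - b : ℝ) : ℂ) ^ (u - 1) * ((y - x : ℝ) : ℂ) ^ (v - 1))
      (Ioi b) ∧
    ∫ y in Ioi b, ((y - b : ℝ) : ℂ) ^ (u - 1) * ((y - x : ℝ) : ℂ) ^ (v - 1)
      = ((b - x : ℝ) : ℂ) ^ (u + v - 1) * Complex.betaIntegral (1 - u - v) u := by
  have hc : (0:ℝ) < b - x := by linarith
  set φ : ℝ → ℝ := fun s => x + (b - x) * s⁻¹ with hφ
  set φ' : ℝ → ℝ := fun s => (b - x) * -(↑s ^ 2)⁻¹ with hφ'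
  have hderiv : ∀ s ∈ Ioo (0:ℝ) 1, HasDerivWithinAt φ (φ' s) (Ioo 0 1) s := by
    intro s hs
    exact (((hasDerivAt_inv hs.1.ne').const_mul (b - x)).const_add x).hasDerivWithinAt
  have hinj : InjOn φ (Ioo 0 1) := by
    intro s hs t ht h
    have h2 : s⁻¹ = t⁻¹ := mul_left_cancel₀ hc.ne' (by
      have := h; simp only [hφ, add_right_inj] at this; exact this)
    exact inv_injective h2
  have himg : φ '' Ioo 0 1 = Ioi b := by
    ext y
    constructor
    · rintro ⟨s, ⟨hs0, hs1⟩, rfl⟩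
      have h1 : 1 < s⁻¹ := (one_lt_inv₀ hs0).2 hs1
      have : b - x < (b - x) * s⁻¹ := by nlinarith
      simp only [hφ, mem_Ioi]; linarith
    · intro hy
      have hy' : b < y := hy
      have hyx : 0 < y - x := by linarith
      refine ⟨(b - x) / (y - x), ⟨div_pos hc hyx, (div_lt_one hyx).2 (by linarith)⟩, ?_⟩
      simp only [hφ]
      field_simp
      ring
  have key : ∀ s ∈ Ioo (0:ℝ) 1,
      |φ' s| • (((φ s - b : ℝ) : ℂ) ^ (u - 1) * ((φ s - x : ℝ) : ℂ) ^ (v - 1))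
        = ((b - x : ℝ) : ℂ) ^ (u + v - 1) *
            (((s : ℝ) : ℂ) ^ ((1 - u - v) - 1) * (1 - ((s : ℝ) : ℂ)) ^ (u - 1)) := by
    intro s hs
    obtain ⟨hs0, hs1⟩ := hs
    have hs1' : (0:ℝ) ≤ 1 - s := by linarith
    have hS : ((s : ℝ) : ℂ) ≠ 0 := Complex.ofReal_ne_zero.2 hs0.ne'
    have hC : ((b - x : ℝ) : ℂ) ≠ 0 := Complex.ofReal_ne_zero.2 hc.ne'
    have harg : ((s : ℝ) : ℂ).arg ≠ Real.pi := by
      rw [Complex.arg_ofReal_of_nonneg hs0.le]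
      exact (Real.pi_ne_zero).symm
    have hb1 : φ s - b = (b - x) * ((1 - s) * s⁻¹) := by
      simp only [hφ]; field_simp; ring
    have hb2 : φ s - x = (b - x) * s⁻¹ := by simp only [hφ]; ring
    have habs : |φ' s| = (b - x) * (s ^ 2)⁻¹ := by
      simp only [hφ', abs_mul, abs_neg, abs_inv, abs_of_pos hc,
        abs_of_pos (pow_pos hs0 2)]
    rw [hb1, hb2, habs, Complex.real_smul]
    rw [Complex.ofReal_mul (b-x) ((1-s) * s⁻¹),
      Complex.mul_cpow_ofReal_nonneg hc.le (by positivity),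
      Complex.ofReal_mul (1-s) s⁻¹,
      Complex.mul_cpow_ofReal_nonneg hs1' (by positivity),
      Complex.ofReal_mul (b-x) s⁻¹,
      Complex.mul_cpow_ofReal_nonneg hc.le (by positivity)]
    simp only [Complex.ofReal_inv, Complex.ofReal_mul, Complex.ofReal_pow, Complex.ofReal_sub,
      Complex.ofReal_one]
    rw [Complex.inv_cpow _ (u-1) harg, Complex.inv_cpow _ (v-1) harg,
      ← Complex.cpow_neg, ← Complex.cpow_neg]
    have hsq : ((((s:ℝ):ℂ)) ^ 2)⁻¹ = ((s:ℝ):ℂ) ^ (-2 : ℂ) := by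
      rw [Complex.cpow_neg, show ((2:ℂ)) = ((2:ℕ):ℂ) by norm_num, Complex.cpow_natCast]
    rw [hsq]
    have hC' : ((b : ℂ) - (x : ℂ)) ≠ 0 := by push_cast at hC; exact hC
    have e1 : ((b : ℂ) - (x : ℂ)) ^ (u + v - 1)
        = ((b : ℂ) - (x : ℂ)) * (((b : ℂ) - (x : ℂ)) ^ (u - 1) * ((b : ℂ) - (x : ℂ)) ^ (v - 1)) := by
      have h : u + v - 1 = 1 + ((u - 1) + (v - 1)) := by ring
      rw [h, Complex.cpow_add _ _ hC', Complex.cpow_add _ _ hC', Complex.cpow_one]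
    have e2 : ((s : ℝ) : ℂ) ^ ((1 - u - v) - 1)
        = ((s : ℝ) : ℂ) ^ (-2 : ℂ) * (((s : ℝ) : ℂ) ^ (-(u - 1)) * ((s : ℝ) : ℂ) ^ (-(v - 1))) := by
      have h : (1 - u - v) - 1 = (-2) + (-(u - 1) + -(v - 1)) := by ring
      rw [h, Complex.cpow_add _ _ hS, Complex.cpow_add _ _ hS]
    rw [e1, e2]; ring
  have hbeta_int : IntegrableOn
      (fun s : ℝ => ((s : ℝ) : ℂ) ^ ((1 - u - v) - 1) * (1 - ((s : ℝ) : ℂ)) ^ (u - 1))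
      (Ioo (0:ℝ) 1) := by
    have h := Complex.betaIntegral_convergent huv hu
    rw [intervalIntegrable_iff_integrableOn_Ioc_of_le zero_le_one] at h
    exact h.mono_set Ioo_subset_Ioc_self
  have hval : Complex.betaIntegral (1 - u - v) u
      = ∫ s in Ioo (0:ℝ) 1, ((s : ℝ) : ℂ) ^ ((1 - u - v) - 1) * (1 - ((s : ℝ) : ℂ)) ^ (u - 1) := by
    rw [Complex.betaIntegral, intervalIntegral.integral_of_le zero_le_one,
      MeasureTheory.integral_Ioc_eq_integral_Ioo]
  constructor
  · rw [← himg,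
      integrableOn_image_iff_integrableOn_abs_deriv_smul measurableSet_Ioo hderiv hinj]
    exact IntegrableOn.congr_fun (hbeta_int.const_mul _)
      (fun s hs => (key s hs).symm) measurableSet_Ioo
  · rw [← himg, integral_image_eq_integral_abs_deriv_smul measurableSet_Ioo hderiv hinj,
      setIntegral_congr_fun measurableSet_Ioo key, MeasureTheory.integral_const_mul, hval]

lemma stieltjes_beta_real (σ τ : ℝ) (hσ : 0 < σ) (hστ : σ + τ < 1)
    {x b : ℝ} (hxb : x < b) :
    ∫ y in Ioi b, (y - b) ^ (σ - 1) * (y - x) ^ (τ - 1)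
      = (b - x) ^ (σ + τ - 1) *
          (Complex.betaIntegral (1 - (σ:ℂ) - (τ:ℂ)) (σ:ℂ)).re := by
  have hu : 0 < ((σ:ℂ)).re := by simpa using hσ
  have huv : 0 < (1 - (σ:ℂ) - (τ:ℂ)).re := by simp; linarith
  have hc : (0:ℝ) < b - x := by linarith
  have hcplx := (stieltjes_beta (σ:ℂ) (τ:ℂ) hu huv hxb).2
  have hcongr : ∀ y ∈ Ioi b,
      (((y - b) ^ (σ - 1) * (y - x) ^ (τ - 1) : ℝ) : ℂ)
        = ((y - b : ℝ) : ℂ) ^ ((σ:ℂ) - 1) * ((y - x : ℝ) : ℂ) ^ ((τ:ℂ) - 1) := by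
    intro y hy
    have hyb : (0:ℝ) ≤ y - b := by simp at hy; linarith
    have hyx : (0:ℝ) ≤ y - x := by simp at hy; linarith
    rw [Complex.ofReal_mul, Complex.ofReal_cpow hyb, Complex.ofReal_cpow hyx]
    push_cast
    ring
  have h1 : ((∫ y in Ioi b, (y - b) ^ (σ - 1) * (y - x) ^ (τ - 1) : ℝ) : ℂ)
      = ((b - x : ℝ) : ℂ) ^ ((σ:ℂ) + (τ:ℂ) - 1)
        * Complex.betaIntegral (1 - (σ:ℂ) - (τ:ℂ)) (σ:ℂ) := by
    rw [← hcplx, ← setIntegral_congr_fun measurableSet_Ioi hcongr]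
    exact integral_ofReal.symm
  have h2 : ((b - x : ℝ) : ℂ) ^ ((σ:ℂ) + (τ:ℂ) - 1)
      = (((b - x) ^ (σ + τ - 1) : ℝ) : ℂ) := by
    rw [Complex.ofReal_cpow hc.le]; push_cast; ring_nf
  rw [h2] at h1
  have := congrArg Complex.re h1
  simpa using this

theorem stmt_19_aux (μ ν : ℂ) (hμν : μ.re < (1 - ν).re) (hμ : 0 < μ.re)
    (m : ℝ) (x : ℝ) (hxm : x < m) (f : ℝ → ℂ)
    (hfm : StronglyMeasurable f)
    (hint : IntegrableOn (fun z : ℝ => ‖f z‖ * (z - x) ^ (μ.re + ν.re - 1)) (Ioi m)) :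
    ∫ y in Ioi m,
        (∫ z in Ioo m y, f z * (((y - z : ℝ) : ℂ) ^ (μ - 1) / Complex.Gamma μ)) *
          (Complex.Gamma (1 - ν) * ((y - x : ℝ) : ℂ) ^ (ν - 1))
      = ∫ z in Ioi m, f z * Complex.Gamma (1 - μ - ν) * ((z - x : ℝ) : ℂ) ^ (μ + ν - 1) := by
  have hμν' : μ.re + ν.re < 1 := by
    have := hμν; simp [Complex.sub_re] at this; linarith
  have huv : 0 < (1 - μ - ν).re := by simp [Complex.sub_re]; linarith
  have hΓμ : Complex.Gamma μ ≠ 0 := Complex.Gamma_ne_zero_of_re_pos hμ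
  set B : ℂ := Complex.betaIntegral (1 - μ - ν) μ with hB
  have hΓrel : Complex.Gamma (1 - μ - ν) * Complex.Gamma μ = Complex.Gamma (1 - ν) * B := by
    simpa [show (1 - μ - ν) + μ = 1 - ν by ring] using
      Complex.Gamma_mul_Gamma_eq_betaIntegral huv hμ
  set Br : ℝ := (Complex.betaIntegral (1 - (μ.re:ℂ) - (ν.re:ℂ)) (μ.re:ℂ)).re with hBr
  set M : Measure ℝ := volume.restrict (Ioi m) with hM
  set g : ℝ → ℝ → ℂ := fun y z =>
    if z < y then f z * ((y - z : ℝ) : ℂ) ^ (μ - 1) * ((y - x : ℝ) : ℂ) ^ (ν - 1) else 0 with hg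
  -- step 1 : rewrite LHS
  have step1 : ∀ y : ℝ,
      (∫ z in Ioo m y, f z * (((y - z : ℝ) : ℂ) ^ (μ - 1) / Complex.Gamma μ)) *
          (Complex.Gamma (1 - ν) * ((y - x : ℝ) : ℂ) ^ (ν - 1))
        = Complex.Gamma (1 - ν) * (Complex.Gamma μ)⁻¹ * ∫ z, g y z ∂M := by
    intro y
    have h1 : ∫ z, g y z ∂M
        = ∫ z in Ioo m y, f z * ((y - z : ℝ) : ℂ) ^ (μ - 1) * ((y - x : ℝ) : ℂ) ^ (ν - 1) := by
      have heq : ∀ z, g y z = Set.indicator (Iio y)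
          (fun z => f z * ((y - z : ℝ) : ℂ) ^ (μ - 1) * ((y - x : ℝ) : ℂ) ^ (ν - 1)) z := by
        intro z
        by_cases h : z < y <;> simp [hg, h, Set.indicator_apply, mem_Iio]
      simp_rw [heq]
      rw [MeasureTheory.integral_indicator measurableSet_Iio, hM,
        Measure.restrict_restrict measurableSet_Iio, Set.Iio_inter_Ioi]
    have h2 : ∫ z in Ioo m y, f z * ((y - z : ℝ) : ℂ) ^ (μ - 1) * ((y - x : ℝ) : ℂ) ^ (ν - 1)
        = (∫ z in Ioo m y, f z * ((y - z : ℝ) : ℂ) ^ (μ - 1)) * ((y - x : ℝ) : ℂ) ^ (ν - 1) :=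
      integral_mul_const _ _
    have h3 : ∫ z in Ioo m y, f z * (((y - z : ℝ) : ℂ) ^ (μ - 1) / Complex.Gamma μ)
        = (Complex.Gamma μ)⁻¹ * ∫ z in Ioo m y, f z * ((y - z : ℝ) : ℂ) ^ (μ - 1) := by
      rw [← integral_const_mul]
      apply integral_congr_ae (ae_of_all _ fun z => ?_)
      ring
    rw [h1, h2, h3]; ring
  -- measurability
  have hmeas : AEStronglyMeasurable (fun p : ℝ × ℝ => g p.1 p.2) (M.prod M) := by
    have hrw : (fun p : ℝ × ℝ => g p.1 p.2) = Set.indicator {p : ℝ × ℝ | p.2 < p.1}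
        (fun p => f p.2 * ((p.1 - p.2 : ℝ) : ℂ) ^ (μ - 1) * ((p.1 - x : ℝ) : ℂ) ^ (ν - 1)) := by
      ext p
      by_cases h : p.2 < p.1 <;> simp [hg, h, Set.indicator_apply]
    rw [hrw]
    have m1 : Measurable fun p : ℝ × ℝ => ((p.1 - p.2 : ℝ) : ℂ) ^ (μ - 1) :=
      measurable_cpow_const (Complex.measurable_ofReal.comp (measurable_fst.sub measurable_snd)) _
    have m2 : Measurable fun p : ℝ × ℝ => ((p.1 - x : ℝ) : ℂ) ^ (ν - 1) :=
      measurable_cpow_const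
        (Complex.measurable_ofReal.comp (measurable_fst.sub measurable_const)) _
    exact (StronglyMeasurable.indicator
      (((hfm.comp_measurable measurable_snd).mul m1.stronglyMeasurable).mul
        m2.stronglyMeasurable)
      (measurableSet_lt measurable_snd measurable_fst)).aestronglyMeasurable
  -- fiberwise integrability
  have hfiber : ∀ z ∈ Ioi m, Integrable (fun y => g y z) M := by
    intro z hz
    have hxz : x < z := hxm.trans hz
    have hrw : (fun y => g y z) = Set.indicator (Ioi z)
        (fun y => f z * (((y - z : ℝ) : ℂ) ^ (μ - 1) * ((y - x : ℝ) : ℂ) ^ (ν - 1))) := by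
      ext y
      by_cases h : z < y <;> simp [hg, h, Set.indicator_apply, mem_Ioi, mul_assoc]
    rw [hrw, integrable_indicator_iff measurableSet_Ioi, hM, IntegrableOn,
      Measure.restrict_restrict measurableSet_Ioi, Set.Ioi_inter_Ioi,
      max_eq_left (le_of_lt hz)]
    exact ((stieltjes_beta μ ν hμ huv hxz).1).const_mul (f z)
  -- norm integral computation
  have hnorm : ∀ z ∈ Ioi m,
      ∫ y, ‖g y z‖ ∂M = ‖f z‖ * (z - x) ^ (μ.re + ν.re - 1) * Br := by
    intro z hz
    have hxz : x < z := hxm.trans hz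
    have heq : ∀ y, ‖g y z‖ = Set.indicator (Ioi z)
        (fun y => ‖f z‖ * ((y - z) ^ (μ.re - 1) * (y - x) ^ (ν.re - 1))) y := by
      intro y
      by_cases h : z < y
      · rw [hg]
        simp only [if_pos h, Set.indicator_of_mem (mem_Ioi.2 h)]
        rw [norm_mul, norm_mul]
        rw [Complex.norm_cpow_eq_rpow_re_of_pos (by linarith : (0:ℝ) < y - z),
          Complex.norm_cpow_eq_rpow_re_of_pos (by linarith : (0:ℝ) < y - x)]
        simp [Complex.sub_re, Complex.one_re, mul_assoc]
      · rw [hg]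
        simp [if_neg h, Set.indicator_of_notMem (by simpa using h : y ∉ Ioi z)]
    simp_rw [heq]
    rw [MeasureTheory.integral_indicator measurableSet_Ioi, hM,
      Measure.restrict_restrict measurableSet_Ioi, Set.Ioi_inter_Ioi,
      max_eq_left (le_of_lt hz), integral_const_mul,
      stieltjes_beta_real μ.re ν.re hμ hμν' hxz]
    rw [hBr]; ring
  -- product integrability
  have hInt : Integrable (fun p : ℝ × ℝ => g p.1 p.2) (M.prod M) := by
    rw [MeasureTheory.integrable_prod_iff' hmeas]
    constructor
    · exact (ae_restrict_iff' measurableSet_Ioi).2 (ae_of_all _ hfiber)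
    · apply (hint.mul_const Br).congr
      exact (ae_restrict_iff' measurableSet_Ioi).2 (ae_of_all _ fun z hz => (hnorm z hz).symm)
  have hswap : ∫ y, (∫ z, g y z ∂M) ∂M = ∫ z, (∫ y, g y z ∂M) ∂M :=
    MeasureTheory.integral_integral_swap hInt
  -- step 4 : compute inner integral after swap
  have step4 : ∀ z ∈ Ioi m,
      ∫ y, g y z ∂M = f z * (((z - x : ℝ) : ℂ) ^ (μ + ν - 1) * B) := by
    intro z hz
    have hxz : x < z := hxm.trans hz
    have hrw : (fun y => g y z) = Set.indicator (Ioi z)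
        (fun y => f z * (((y - z : ℝ) : ℂ) ^ (μ - 1) * ((y - x : ℝ) : ℂ) ^ (ν - 1))) := by
      ext y
      by_cases h : z < y <;> simp [hg, h, Set.indicator_apply, mem_Ioi, mul_assoc]
    rw [hrw, MeasureTheory.integral_indicator measurableSet_Ioi, hM,
      Measure.restrict_restrict measurableSet_Ioi, Set.Ioi_inter_Ioi,
      max_eq_left (le_of_lt hz), integral_const_mul, (stieltjes_beta μ ν hμ huv hxz).2]
  -- put everything together
  have hconst : Complex.Gamma (1 - ν) * (Complex.Gamma μ)⁻¹ * B = Complex.Gamma (1 - μ - ν) := by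
    field_simp
    linear_combination hΓrel.symm
  calc ∫ y in Ioi m,
        (∫ z in Ioo m y, f z * (((y - z : ℝ) : ℂ) ^ (μ - 1) / Complex.Gamma μ)) *
          (Complex.Gamma (1 - ν) * ((y - x : ℝ) : ℂ) ^ (ν - 1))
      = ∫ y, (Complex.Gamma (1 - ν) * (Complex.Gamma μ)⁻¹ * ∫ z, g y z ∂M) ∂M :=
        integral_congr_ae (ae_of_all _ step1)
    _ = Complex.Gamma (1 - ν) * (Complex.Gamma μ)⁻¹ * ∫ y, (∫ z, g y z ∂M) ∂M :=
        integral_const_mul _ _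
    _ = Complex.Gamma (1 - ν) * (Complex.Gamma μ)⁻¹ * ∫ z, (∫ y, g y z ∂M) ∂M := by rw [hswap]
    _ = ∫ z, (Complex.Gamma (1 - ν) * (Complex.Gamma μ)⁻¹ * ∫ y, g y z ∂M) ∂M :=
        (integral_const_mul _ _).symm
    _ = ∫ z in Ioi m, f z * Complex.Gamma (1 - μ - ν) * ((z - x : ℝ) : ℂ) ^ (μ + ν - 1) := by
        apply integral_congr_ae
        have hae : ∀ᵐ z ∂M, z ∈ Ioi m := by
          rw [hM]; exact ae_restrict_mem measurableSet_Ioi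
        filter_upwards [hae] with z hz
        rw [step4 z hz, ← hconst]
        ring

/-- The generalized Stieltjes transform of order `1-ν` of the fractional integral of
order `μ` of `f` equals the generalized Stieltjes transform of order `1-μ-ν` of `f`. -/
theorem stmt_19 (μ ν : ℂ) (hμν : μ.re < (1 - ν).re) (hμ : 0 < μ.re)
    (m : ℝ) (x : ℝ) (hxm : x < m) (f : ℝ → ℂ)
    (hf : LocallyIntegrableOn f (Ioi m))
    (hint : IntegrableOn (fun z : ℝ => ‖f z‖ * (z - x) ^ (μ.re + ν.re - 1)) (Ioi m)) :
    ∫ y in Ioi m,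
        (∫ z in Ioo m y, f z * (((y - z : ℝ) : ℂ) ^ (μ - 1) / Complex.Gamma μ)) *
          (Complex.Gamma (1 - ν) * ((y - x : ℝ) : ℂ) ^ (ν - 1))
      = ∫ z in Ioi m, f z * Complex.Gamma (1 - μ - ν) * ((z - x : ℝ) : ℂ) ^ (μ + ν - 1) := by
  obtain ⟨F, hF, hfF⟩ := hf.aestronglyMeasurable
  have hintF : IntegrableOn (fun z : ℝ => ‖F z‖ * (z - x) ^ (μ.re + ν.re - 1)) (Ioi m) := by
    apply hint.congr
    filter_upwards [hfF] with z hz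
    rw [hz]
  have hmain := stmt_19_aux μ ν hμν hμ m x hxm F hF hintF
  have hL : ∫ y in Ioi m,
        (∫ z in Ioo m y, f z * (((y - z : ℝ) : ℂ) ^ (μ - 1) / Complex.Gamma μ)) *
          (Complex.Gamma (1 - ν) * ((y - x : ℝ) : ℂ) ^ (ν - 1))
      = ∫ y in Ioi m,
        (∫ z in Ioo m y, F z * (((y - z : ℝ) : ℂ) ^ (μ - 1) / Complex.Gamma μ)) *
          (Complex.Gamma (1 - ν) * ((y - x : ℝ) : ℂ) ^ (ν - 1)) := by
    apply integral_congr_ae (ae_of_all _ fun y => ?_)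
    congr 1
    apply integral_congr_ae
    have h' : ∀ᵐ z ∂volume.restrict (Ioo m y), f z = F z :=
      ae_restrict_of_ae_restrict_of_subset Ioo_subset_Ioi_self hfF
    filter_upwards [h'] with z hz
    rw [hz]
  have hR : ∫ z in Ioi m, F z * Complex.Gamma (1 - μ - ν) * ((z - x : ℝ) : ℂ) ^ (μ + ν - 1)
      = ∫ z in Ioi m, f z * Complex.Gamma (1 - μ - ν) * ((z - x : ℝ) : ℂ) ^ (μ + ν - 1) := by
    apply integral_congr_ae
    filter_upwards [hfF] with z hz
    rw [hz]
  rw [hL, hmain, hR]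
end
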